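/- arXiv:0908.0670 — 5 statements merged into one kernel-verified Lean document; each statement's English description precedes it below -/
import Mathlib

section
/- For positive integers α and β and nonzero real numbers X, Y with X + Y ≠ 0, one has 1/(X^α · Y^β) = ∑_{τ=0}^{β-1} C(α-1+τ, τ) / ((X+Y)^{α+τ} · Y^{β-τ}) + ∑_{τ=0}^{α-1} C(β-1+τ, τ) / ((X+Y)^{β+τ} · X^{α-τ}). -/
open Finset

private lemma recA_pfd (a b : ℕ) (z : ℝ) :
    ∑ τ ∈ range (b+1), ((a+1+τ).choose τ : ℝ) * z^τ
    = ∑ τ ∈ range (b+1), ((a+τ).choose τ : ℝ) * z^τ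
      + z * ∑ τ ∈ range b, ((a+1+τ).choose τ : ℝ) * z^τ := by
  rw [Finset.sum_range_succ' (fun τ => ((a+1+τ).choose τ : ℝ) * z^τ),
      Finset.sum_range_succ' (fun τ => ((a+τ).choose τ : ℝ) * z^τ),
      Finset.mul_sum]
  have hterm : ∀ τ, ((a+1+(τ+1)).choose (τ+1) : ℝ) * z^(τ+1)
      = ((a+(τ+1)).choose (τ+1) : ℝ) * z^(τ+1) + z * (((a+1+τ).choose τ : ℝ) * z^τ) := by
    intro τ
    have h : (a+1+(τ+1)).choose (τ+1) = (a+1+τ).choose τ + (a+1+τ).choose (τ+1) := by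
      have := Nat.choose_succ_succ (a+1+τ) τ
      rw [show a+1+(τ+1) = a+1+τ+1 by omega]; exact this
    have h2 : (a+(τ+1)).choose (τ+1) = (a+1+τ).choose (τ+1) := by
      congr 1; omega
    rw [h, h2]
    push_cast
    ring
  simp only [hterm]
  rw [Finset.sum_add_distrib]
  simp only [Nat.choose_zero_right, Nat.cast_one, pow_zero, mul_one]
  ring

private lemma core_pfd (a : ℕ) : ∀ b : ℕ, ∀ w z : ℝ, w + z = 1 →
    w^(a+1) * ∑ τ ∈ range (b+1), ((a+τ).choose τ : ℝ) * z^τ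
    + z^(b+1) * ∑ τ ∈ range (a+1), ((b+τ).choose τ : ℝ) * w^τ = 1 := by
  induction a with
  | zero =>
    intro b w z h
    simp only [Nat.zero_add, Nat.choose_self, zero_add, Nat.cast_one, one_mul,
      Finset.range_one, Finset.sum_singleton, Nat.add_zero, Nat.choose_zero_right,
      pow_zero, mul_one, pow_one]
    have hg := geom_sum_mul z (b+1)
    linear_combination (∑ τ ∈ range (b+1), z^τ) * h - hg
  | succ a ih =>
    intro b
    induction b with
    | zero =>
      intro w z h
      simp only [Nat.zero_add, Nat.choose_self, zero_add, Nat.cast_one, one_mul,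
        Finset.range_one, Finset.sum_singleton, Nat.add_zero, Nat.choose_zero_right,
        pow_zero, mul_one, pow_one]
      have hg := geom_sum_mul w (a+2)
      linear_combination (∑ τ ∈ range (a+1+1), w^τ) * h - hg
    | succ b ihb =>
      intro w z h
      have hA := recA_pfd a (b+1) z
      have hB := recA_pfd b (a+1) w
      have e1 : ∀ τ, a + 1 + τ = a + (τ+1) := by omega
      have I1 := ih (b+1) w z h
      have I2 := ihb w z h
      calc w^(a+1+1) * ∑ τ ∈ range (b+1+1), ((a+1+τ).choose τ : ℝ) * z^τ
          + z^(b+1+1) * ∑ τ ∈ range (a+1+1), ((b+1+τ).choose τ : ℝ) * w^τ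
          = w^(a+2) * (∑ τ ∈ range (b+2), ((a+τ).choose τ : ℝ) * z^τ
              + z * ∑ τ ∈ range (b+1), ((a+1+τ).choose τ : ℝ) * z^τ)
          + z^(b+2) * (∑ τ ∈ range (a+2), ((b+τ).choose τ : ℝ) * w^τ
              + w * ∑ τ ∈ range (a+1), ((b+1+τ).choose τ : ℝ) * w^τ) := by
            rw [hA, hB]
        _ = 1 := by linear_combination w * I1 + z * I2 + h

theorem partial_fraction_decomposition (α β : ℕ) (hα : 1 ≤ α) (hβ : 1 ≤ β)
    (X Y : ℝ) (hX : X ≠ 0) (hY : Y ≠ 0) (hXY : X + Y ≠ 0) :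
    1 / (X ^ α * Y ^ β) =
      (∑ τ ∈ Finset.range β, (Nat.choose (α - 1 + τ) τ : ℝ) /
        ((X + Y) ^ (α + τ) * Y ^ (β - τ))) +
      (∑ τ ∈ Finset.range α, (Nat.choose (β - 1 + τ) τ : ℝ) /
        ((X + Y) ^ (β + τ) * X ^ (α - τ))) := by
  obtain ⟨a, rfl⟩ := Nat.exists_eq_succ_of_ne_zero (by omega : α ≠ 0)
  obtain ⟨b, rfl⟩ := Nat.exists_eq_succ_of_ne_zero (by omega : β ≠ 0)
  simp only [Nat.add_sub_cancel, Nat.succ_sub_one]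
  set w : ℝ := X / (X + Y) with hw
  set z : ℝ := Y / (X + Y) with hz
  have hwz : w + z = 1 := by rw [hw, hz, ← add_div, div_self hXY]
  have key := core_pfd a b w z hwz
  have hD : X^(a+1) * Y^(b+1) ≠ 0 := by positivity
  have h1 : ∀ τ ∈ range (b+1), ((a+τ).choose τ : ℝ) / ((X+Y)^(a+1+τ) * Y^(b+1-τ))
      = w^(a+1) * (((a+τ).choose τ : ℝ) * z^τ) / (X^(a+1) * Y^(b+1)) := by
    intro τ hτ
    have hτ' : τ ≤ b+1 := by simp at hτ; omega
    rw [← pow_sub_mul_pow Y hτ', hw, hz, div_pow, div_pow, pow_add]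
    rw [div_eq_div_iff (by positivity) (by positivity)]
    field_simp
  have h2 : ∀ τ ∈ range (a+1), ((b+τ).choose τ : ℝ) / ((X+Y)^(b+1+τ) * X^(a+1-τ))
      = z^(b+1) * (((b+τ).choose τ : ℝ) * w^τ) / (X^(a+1) * Y^(b+1)) := by
    intro τ hτ
    have hτ' : τ ≤ a+1 := by simp at hτ; omega
    rw [← pow_sub_mul_pow X hτ', hw, hz, div_pow, div_pow, pow_add]
    rw [div_eq_div_iff (by positivity) (by positivity)]
    field_simp
  rw [Finset.sum_congr rfl h1, Finset.sum_congr rfl h2,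
      ← Finset.sum_div, ← Finset.sum_div, ← Finset.mul_sum, ← Finset.mul_sum,
      ← add_div, key]
end

section
/- For integers p, q ≥ 2, ζ(p)·ζ(q) = ∑_{τ=0}^{q-1} C(p-1+τ, τ) ζ(p+τ, q-τ) + ∑_{τ=0}^{p-1} C(q-1+τ, τ) ζ(q+τ, p-τ). -/
open Finset

lemma tele (c : ℕ) :
    HasSum (fun a : ℕ => 1 / (((a : ℝ) + c + 1) * ((a : ℝ) + c + 2))) (1 / ((c : ℝ) + 1)) := by
  have hnn : ∀ a : ℕ, 0 ≤ 1 / (((a : ℝ) + c + 1) * ((a : ℝ) + c + 2)) := by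
    intro a; positivity
  rw [hasSum_iff_tendsto_nat_of_nonneg hnn]
  have hps : ∀ n : ℕ, ∑ i ∈ Finset.range n, 1 / (((i : ℝ) + c + 1) * ((i : ℝ) + c + 2))
      = 1 / ((c : ℝ) + 1) - 1 / ((n : ℝ) + c + 1) := by
    intro n
    induction n with
    | zero => simp
    | succ n ih =>
      rw [Finset.sum_range_succ, ih]
      have h1 : ((n : ℝ) + c + 1) ≠ 0 := by positivity
      have h2 : ((n : ℝ) + c + 2) ≠ 0 := by positivity
      have h3 : ((c : ℝ) + 1) ≠ 0 := by positivity
      push_cast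
      field_simp
      ring
  simp only [hps]
  have : Filter.Tendsto (fun n : ℕ => 1 / ((n : ℝ) + c + 1)) Filter.atTop (nhds 0) := by
    have h := (tendsto_one_div_add_atTop_nhds_zero_nat (𝕜 := ℝ)).comp (Filter.tendsto_add_atTop_nat c)
    refine h.congr (fun n => ?_)
    push_cast [Function.comp]
    ring_nf
  have := Filter.Tendsto.const_sub (1 / ((c : ℝ) + 1)) this
  simpa using this

lemma sum1 {k : ℕ} (hk : 2 ≤ k) : Summable (fun n : ℕ => 1 / ((n : ℝ) + 1) ^ k) := by
  have h := Real.summable_one_div_nat_pow.mpr hk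
  have h2 := (summable_nat_add_iff 1).mpr h
  refine h2.congr (fun n => ?_)
  push_cast
  ring

-- pointwise bound : 1/((a+b+2)^P (b+1)^Q) ≤ (1/(b+1)^(P+Q-2)) * (1/((a+b+1)(a+b+2)))
lemma pbound (P Q : ℕ) (hP : 2 ≤ P) (a b : ℕ) :
    1 / (((a : ℝ) + b + 2) ^ P * ((b : ℝ) + 1) ^ Q) ≤
      (1 / ((b : ℝ) + 1) ^ (P + Q - 2)) * (1 / (((a : ℝ) + b + 1) * ((a : ℝ) + b + 2))) := by
  obtain ⟨P', rfl⟩ : ∃ P', P = P' + 2 := ⟨P - 2, by omega⟩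
  have hQ2 : P' + 2 + Q - 2 = P' + Q := by omega
  rw [hQ2, one_div_mul_one_div]
  apply one_div_le_one_div_of_le
  · positivity
  · calc ((b : ℝ) + 1) ^ (P' + Q) * (((a : ℝ) + b + 1) * ((a : ℝ) + b + 2))
        = (((b : ℝ) + 1) ^ P' * (((a : ℝ) + b + 1) * ((a : ℝ) + b + 2))) * ((b : ℝ) + 1) ^ Q := by
          rw [pow_add]; ring
      _ ≤ (((a : ℝ) + b + 2) ^ P' * (((a : ℝ) + b + 2) * ((a : ℝ) + b + 2))) * ((b : ℝ) + 1) ^ Q := by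
          gcongr <;> [skip; linarith; skip] <;> push_cast <;> linarith
      _ = ((a : ℝ) + b + 2) ^ (P' + 2) * ((b : ℝ) + 1) ^ Q := by rw [pow_add]; ring

lemma summable_aux (P Q : ℕ) (hP : 2 ≤ P) (hQ : 1 ≤ Q) :
    Summable (fun x : ℕ × ℕ => 1 / (((x.1 : ℝ) + (x.2 : ℝ) + 2) ^ P * ((x.2 : ℝ) + 1) ^ Q)) := by
  have key : Summable (fun y : ℕ × ℕ => 1 / (((y.2 : ℝ) + (y.1 : ℝ) + 2) ^ P * ((y.1 : ℝ) + 1) ^ Q)) := by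
    rw [summable_prod_of_nonneg (by intro x; positivity)]
    constructor
    · intro b
      refine Summable.of_nonneg_of_le (fun a => by positivity) (fun a => ?_)
        (((tele b).summable).mul_left (1 / ((b : ℝ) + 1) ^ (P + Q - 2)))
      exact pbound P Q hP a b
    · refine Summable.of_nonneg_of_le (fun b => tsum_nonneg (fun a => by positivity))
        (fun b => ?_) (sum1 (k := P + Q - 1) (by omega))
      have hle : ∑' a : ℕ, 1 / (((a : ℝ) + b + 2) ^ P * ((b : ℝ) + 1) ^ Q) ≤
          ∑' a : ℕ, (1 / ((b : ℝ) + 1) ^ (P + Q - 2)) * (1 / (((a : ℝ) + b + 1) * ((a : ℝ) + b + 2))) := by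
        refine Summable.tsum_le_tsum (fun a => pbound P Q hP a b) ?_ ?_
        · refine Summable.of_nonneg_of_le (fun a => by positivity) (fun a => pbound P Q hP a b)
            (((tele b).summable).mul_left _)
        · exact ((tele b).summable).mul_left _
      refine le_trans hle ?_
      rw [tsum_mul_left, (tele b).tsum_eq, one_div_mul_one_div]
      apply le_of_eq
      congr 1
      rw [← pow_succ]
      congr 1
      omega
  have := key.prod_symm
  refine this.congr (fun z => ?_)
  simp [Prod.swap]

-- unconditional shift identity
lemma shift_term (c s z : ℝ) (U : ℕ) :
    (c * (1 / (s ^ U * z))) * s⁻¹ = c * (1 / (s ^ (U + 1) * z)) := by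
  rw [pow_succ, one_div, one_div, mul_inv, mul_inv, mul_inv]
  ring

lemma pf_one : ∀ (q : ℕ), 1 ≤ q → ∀ x y : ℝ, 0 < x → 0 < y →
    1 / (x ^ 1 * y ^ q) =
      (∑ i ∈ Finset.range q, ((1 - 1 + i).choose i : ℝ) * (1 / ((x + y) ^ (1 + i) * y ^ (q - i)))) +
      (∑ j ∈ Finset.range 1, ((q - 1 + j).choose j : ℝ) * (1 / ((x + y) ^ (q + j) * x ^ (1 - j)))) := by
  intro q hq
  obtain ⟨Q, rfl⟩ : ∃ Q, q = Q + 1 := ⟨q - 1, by omega⟩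
  clear hq
  induction Q with
  | zero =>
    intro x y hx hy
    simp only [Finset.sum_range_one]
    norm_num
    field_simp
  | succ Q ih =>
    intro x y hx hy
    have hxy : (0:ℝ) < x + y := by linarith
    have key : 1 / (x ^ 1 * y ^ (Q + 1 + 1)) =
        1 / ((x + y) ^ (1 + 0) * y ^ (Q + 1 + 1 - 0)) + (1 / (x ^ 1 * y ^ (Q + 1))) * (x + y)⁻¹ := by
      have h1 : x ≠ 0 := ne_of_gt hx
      have h2 : y ≠ 0 := ne_of_gt hy
      have h3 : x + y ≠ 0 := ne_of_gt hxy
      rw [Nat.sub_zero]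
      field_simp
      ring
    rw [key, ih x y hx hy]
    rw [add_mul, Finset.sum_mul, Finset.sum_range_one, Finset.sum_range_one]
    rw [Finset.sum_range_succ' (fun i => ((1 - 1 + i).choose i : ℝ) *
        (1 / ((x + y) ^ (1 + i) * y ^ (Q + 1 + 1 - i)))) (Q + 1)]
    have hA : ∑ i ∈ Finset.range (Q + 1),
          (((1 - 1 + i).choose i : ℝ) * (1 / ((x + y) ^ (1 + i) * y ^ (Q + 1 - i)))) * (x + y)⁻¹
        = ∑ i ∈ Finset.range (Q + 1),
          ((1 - 1 + (i + 1)).choose (i + 1) : ℝ) * (1 / ((x + y) ^ (1 + (i + 1)) * y ^ (Q + 1 + 1 - (i + 1)))) := by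
      refine Finset.sum_congr rfl (fun i hi => ?_)
      rw [shift_term]
      have e1 : Q + 1 + 1 - (i + 1) = Q + 1 - i := by omega
      have e2 : 1 + (i + 1) = (1 + i) + 1 := by omega
      have e3 : ((1 - 1 + (i + 1)).choose (i + 1) : ℝ) = ((1 - 1 + i).choose i : ℝ) := by
        norm_num
      rw [e1, e2, e3]
    rw [hA]
    have hB : (((Q + 1 - 1 + 0).choose 0 : ℝ) * (1 / ((x + y) ^ (Q + 1 + 0) * x ^ (1 - 0)))) * (x + y)⁻¹
        = ((Q + 1 + 1 - 1 + 0).choose 0 : ℝ) * (1 / ((x + y) ^ (Q + 1 + 1 + 0) * x ^ (1 - 0))) := by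
      rw [shift_term]
      norm_num
    rw [hB]
    simp only [Nat.choose_zero_right, Nat.cast_one, one_mul]
    ring
lemma pf : ∀ (n p q : ℕ), p + q = n → 1 ≤ p → 1 ≤ q → ∀ x y : ℝ, 0 < x → 0 < y →
    1 / (x ^ p * y ^ q) =
      (∑ i ∈ Finset.range q, ((p - 1 + i).choose i : ℝ) * (1 / ((x + y) ^ (p + i) * y ^ (q - i)))) +
      (∑ j ∈ Finset.range p, ((q - 1 + j).choose j : ℝ) * (1 / ((x + y) ^ (q + j) * x ^ (p - j)))) := by
  intro n
  induction n using Nat.strong_induction_on with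
  | _ n IH =>
    intro p q hn hp hq x y hx hy
    rcases eq_or_lt_of_le hp with hp1 | hp2
    · -- p = 1
      rw [← hp1]
      exact pf_one q hq x y hx hy
    · rcases eq_or_lt_of_le hq with hq1 | hq2
      · -- q = 1, p ≥ 2 : use symmetry with pf_one
        rw [← hq1]
        have h := pf_one p hp y x hy hx
        rw [show y + x = x + y from add_comm y x] at h
        rw [show y ^ 1 * x ^ p = x ^ p * y ^ 1 from mul_comm _ _] at h
        rw [h, add_comm]
      · -- p ≥ 2, q ≥ 2
        obtain ⟨P, rfl⟩ : ∃ P, p = P + 1 := ⟨p - 1, by omega⟩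
        obtain ⟨Q, rfl⟩ : ∃ Q, q = Q + 1 := ⟨q - 1, by omega⟩
        have hP : 1 ≤ P := by omega
        have hQ : 1 ≤ Q := by omega
        have hxy : (0:ℝ) < x + y := by linarith
        have h1 := IH (P + (Q + 1)) (by omega) P (Q + 1) rfl hP hq x y hx hy
        have h2 := IH (P + 1 + Q) (by omega) (P + 1) Q rfl hp hQ x y hx hy
        have key : 1 / (x ^ (P + 1) * y ^ (Q + 1)) =
            (1 / (x ^ P * y ^ (Q + 1))) * (x + y)⁻¹ + (1 / (x ^ (P + 1) * y ^ Q)) * (x + y)⁻¹ := by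
          have h1' : x ≠ 0 := ne_of_gt hx
          have h2' : y ≠ 0 := ne_of_gt hy
          have h3' : x + y ≠ 0 := ne_of_gt hxy
          field_simp
          ring
        rw [key, h1, h2, add_mul, add_mul, Finset.sum_mul, Finset.sum_mul, Finset.sum_mul,
          Finset.sum_mul]
        -- name the four shifted sums
        have hA1 : ∑ i ∈ Finset.range (Q + 1),
              (((P - 1 + i).choose i : ℝ) * (1 / ((x + y) ^ (P + i) * y ^ (Q + 1 - i)))) * (x + y)⁻¹
            = ∑ i ∈ Finset.range (Q + 1),
              ((P - 1 + i).choose i : ℝ) * (1 / ((x + y) ^ (P + i + 1) * y ^ (Q + 1 - i))) := by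
          exact Finset.sum_congr rfl (fun i hi => shift_term _ _ _ _)
        have hA2 : ∑ i ∈ Finset.range Q,
              (((P + 1 - 1 + i).choose i : ℝ) * (1 / ((x + y) ^ (P + 1 + i) * y ^ (Q - i)))) * (x + y)⁻¹
            = ∑ i ∈ Finset.range Q,
              ((P + i).choose i : ℝ) * (1 / ((x + y) ^ (P + i + 2) * y ^ (Q - i))) := by
          refine Finset.sum_congr rfl (fun i hi => ?_)
          rw [shift_term]
          have e1 : P + 1 - 1 + i = P + i := by omega
          have e2 : P + 1 + i + 1 = P + i + 2 := by omega
          rw [e1, e2]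
        have hB1 : ∑ j ∈ Finset.range P,
              (((Q + 1 - 1 + j).choose j : ℝ) * (1 / ((x + y) ^ (Q + 1 + j) * x ^ (P - j)))) * (x + y)⁻¹
            = ∑ j ∈ Finset.range P,
              ((Q + j).choose j : ℝ) * (1 / ((x + y) ^ (Q + j + 2) * x ^ (P - j))) := by
          refine Finset.sum_congr rfl (fun j hj => ?_)
          rw [shift_term]
          have e1 : Q + 1 - 1 + j = Q + j := by omega
          have e2 : Q + 1 + j + 1 = Q + j + 2 := by omega
          rw [e1, e2]
        have hB2 : ∑ j ∈ Finset.range (P + 1),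
              (((Q - 1 + j).choose j : ℝ) * (1 / ((x + y) ^ (Q + j) * x ^ (P + 1 - j)))) * (x + y)⁻¹
            = ∑ j ∈ Finset.range (P + 1),
              ((Q - 1 + j).choose j : ℝ) * (1 / ((x + y) ^ (Q + j + 1) * x ^ (P + 1 - j))) := by
          exact Finset.sum_congr rfl (fun j hj => shift_term _ _ _ _)
        rw [hA1, hA2, hB1, hB2]
        -- now split the target sums and the A1, B2 sums
        have hTA : ∑ i ∈ Finset.range (Q + 1),
              ((P + 1 - 1 + i).choose i : ℝ) * (1 / ((x + y) ^ (P + 1 + i) * y ^ (Q + 1 - i)))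
            = (∑ i ∈ Finset.range Q,
                ((P + i + 1).choose (i + 1) : ℝ) * (1 / ((x + y) ^ (P + i + 2) * y ^ (Q - i))))
              + 1 / ((x + y) ^ (P + 1) * y ^ (Q + 1)) := by
          rw [Finset.sum_range_succ' (fun i => ((P + 1 - 1 + i).choose i : ℝ) *
              (1 / ((x + y) ^ (P + 1 + i) * y ^ (Q + 1 - i)))) Q]
          congr 1
          · refine Finset.sum_congr rfl (fun i hi => ?_)
            have e1 : P + 1 - 1 + (i + 1) = P + i + 1 := by omega
            have e2 : P + 1 + (i + 1) = P + i + 2 := by omega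
            have e3 : Q + 1 - (i + 1) = Q - i := by omega
            rw [e1, e2, e3]
          · norm_num
        have hTB : ∑ j ∈ Finset.range (P + 1),
              ((Q + 1 - 1 + j).choose j : ℝ) * (1 / ((x + y) ^ (Q + 1 + j) * x ^ (P + 1 - j)))
            = (∑ j ∈ Finset.range P,
                ((Q + j + 1).choose (j + 1) : ℝ) * (1 / ((x + y) ^ (Q + j + 2) * x ^ (P - j))))
              + 1 / ((x + y) ^ (Q + 1) * x ^ (P + 1)) := by
          rw [Finset.sum_range_succ' (fun j => ((Q + 1 - 1 + j).choose j : ℝ) *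
              (1 / ((x + y) ^ (Q + 1 + j) * x ^ (P + 1 - j)))) P]
          congr 1
          · refine Finset.sum_congr rfl (fun j hj => ?_)
            have e1 : Q + 1 - 1 + (j + 1) = Q + j + 1 := by omega
            have e2 : Q + 1 + (j + 1) = Q + j + 2 := by omega
            have e3 : P + 1 - (j + 1) = P - j := by omega
            rw [e1, e2, e3]
          · norm_num
        rw [hTA, hTB]
        -- split A1 (range (Q+1)) and B2 (range (P+1))
        have hA1s : ∑ i ∈ Finset.range (Q + 1),
              ((P - 1 + i).choose i : ℝ) * (1 / ((x + y) ^ (P + i + 1) * y ^ (Q + 1 - i)))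
            = (∑ i ∈ Finset.range Q,
                ((P + i).choose (i + 1) : ℝ) * (1 / ((x + y) ^ (P + i + 2) * y ^ (Q - i))))
              + 1 / ((x + y) ^ (P + 1) * y ^ (Q + 1)) := by
          rw [Finset.sum_range_succ' (fun i => ((P - 1 + i).choose i : ℝ) *
              (1 / ((x + y) ^ (P + i + 1) * y ^ (Q + 1 - i)))) Q]
          congr 1
          · refine Finset.sum_congr rfl (fun i hi => ?_)
            have e1 : P - 1 + (i + 1) = P + i := by omega
            have e2 : P + (i + 1) + 1 = P + i + 2 := by omega
            have e3 : Q + 1 - (i + 1) = Q - i := by omega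
            rw [e1, e2, e3]
          · have e4 : P - 1 + 0 = P - 1 := by omega
            simp
        have hB2s : ∑ j ∈ Finset.range (P + 1),
              ((Q - 1 + j).choose j : ℝ) * (1 / ((x + y) ^ (Q + j + 1) * x ^ (P + 1 - j)))
            = (∑ j ∈ Finset.range P,
                ((Q + j).choose (j + 1) : ℝ) * (1 / ((x + y) ^ (Q + j + 2) * x ^ (P - j))))
              + 1 / ((x + y) ^ (Q + 1) * x ^ (P + 1)) := by
          rw [Finset.sum_range_succ' (fun j => ((Q - 1 + j).choose j : ℝ) *
              (1 / ((x + y) ^ (Q + j + 1) * x ^ (P + 1 - j)))) P]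
          congr 1
          · refine Finset.sum_congr rfl (fun j hj => ?_)
            have e1 : Q - 1 + (j + 1) = Q + j := by omega
            have e2 : Q + (j + 1) + 1 = Q + j + 2 := by omega
            have e3 : P + 1 - (j + 1) = P - j := by omega
            rw [e1, e2, e3]
          · simp
        rw [hA1s, hB2s]
        -- now combine sums with Pascal
        have pascalA : ∀ i ∈ Finset.range Q,
            ((P + i).choose (i + 1) : ℝ) * (1 / ((x + y) ^ (P + i + 2) * y ^ (Q - i)))
            + ((P + i).choose i : ℝ) * (1 / ((x + y) ^ (P + i + 2) * y ^ (Q - i)))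
            = ((P + i + 1).choose (i + 1) : ℝ) * (1 / ((x + y) ^ (P + i + 2) * y ^ (Q - i))) := by
          intro i _
          rw [Nat.choose_succ_succ (P + i) i]
          push_cast
          ring
        have pascalB : ∀ j ∈ Finset.range P,
            ((Q + j).choose (j + 1) : ℝ) * (1 / ((x + y) ^ (Q + j + 2) * x ^ (P - j)))
            + ((Q + j).choose j : ℝ) * (1 / ((x + y) ^ (Q + j + 2) * x ^ (P - j)))
            = ((Q + j + 1).choose (j + 1) : ℝ) * (1 / ((x + y) ^ (Q + j + 2) * x ^ (P - j))) := by
          intro j _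
          rw [Nat.choose_succ_succ (Q + j) j]
          push_cast
          ring
        have hsumA : ∑ i ∈ Finset.range Q,
              ((P + i).choose (i + 1) : ℝ) * (1 / ((x + y) ^ (P + i + 2) * y ^ (Q - i)))
            + ∑ i ∈ Finset.range Q,
              ((P + i).choose i : ℝ) * (1 / ((x + y) ^ (P + i + 2) * y ^ (Q - i)))
            = ∑ i ∈ Finset.range Q,
              ((P + i + 1).choose (i + 1) : ℝ) * (1 / ((x + y) ^ (P + i + 2) * y ^ (Q - i))) := by
          rw [← Finset.sum_add_distrib]
          exact Finset.sum_congr rfl pascalA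
        have hsumB : ∑ j ∈ Finset.range P,
              ((Q + j).choose (j + 1) : ℝ) * (1 / ((x + y) ^ (Q + j + 2) * x ^ (P - j)))
            + ∑ j ∈ Finset.range P,
              ((Q + j).choose j : ℝ) * (1 / ((x + y) ^ (Q + j + 2) * x ^ (P - j)))
            = ∑ j ∈ Finset.range P,
              ((Q + j + 1).choose (j + 1) : ℝ) * (1 / ((x + y) ^ (Q + j + 2) * x ^ (P - j))) := by
          rw [← Finset.sum_add_distrib]
          exact Finset.sum_congr rfl pascalB
        linarith [hsumA, hsumB]

/-- The Riemann zeta value `ζ(p) = ∑_{n ≥ 1} n^{-p}`. -/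
noncomputable def zeta1 (p : ℕ) : ℝ := ∑' n : ℕ, 1 / ((n : ℝ) + 1) ^ p

/-- The double zeta value `ζ(p, q) = ∑_{m > n > 0} m^{-p} n^{-q}`,
parametrized by `m = a + b + 2`, `n = b + 1`. -/
noncomputable def zeta2 (p q : ℕ) : ℝ :=
  ∑' (a : ℕ) (b : ℕ), 1 / (((a : ℝ) + (b : ℝ) + 2) ^ p * ((b : ℝ) + 1) ^ q)

theorem euler_decomposition (p q : ℕ) (hp : 2 ≤ p) (hq : 2 ≤ q) :
    zeta1 p * zeta1 q =
      (∑ τ ∈ Finset.range q, (Nat.choose (p - 1 + τ) τ : ℝ) * zeta2 (p + τ) (q - τ)) +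
      (∑ τ ∈ Finset.range p, (Nat.choose (q - 1 + τ) τ : ℝ) * zeta2 (q + τ) (p - τ)) := by
  classical
  -- the summand families
  set D : ℕ → ℕ × ℕ → ℝ := fun i z =>
    1 / (((z.1 : ℝ) + (z.2 : ℝ) + 2) ^ (p + i) * ((z.2 : ℝ) + 1) ^ (q - i)) with hD_def
  set E : ℕ → ℕ × ℕ → ℝ := fun j z =>
    1 / (((z.1 : ℝ) + (z.2 : ℝ) + 2) ^ (q + j) * ((z.1 : ℝ) + 1) ^ (p - j)) with hE_def
  have hDsum : ∀ i ∈ Finset.range q, Summable (D i) := by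
    intro i hi
    exact summable_aux (p + i) (q - i) (by omega) (by simp at hi; omega)
  have hEsum : ∀ j ∈ Finset.range p, Summable (E j) := by
    intro j hj
    have h := (summable_aux (q + j) (p - j) (by omega) (by simp at hj; omega)).prod_symm
    refine h.congr (fun z => ?_)
    simp only [hE_def, Prod.snd_swap, Prod.fst_swap]
    ring_nf
  -- pointwise partial fraction identity
  have hpoint : ∀ z : ℕ × ℕ,
      (1 / ((z.1 : ℝ) + 1) ^ p) * (1 / ((z.2 : ℝ) + 1) ^ q) =
        (∑ i ∈ Finset.range q, ((p - 1 + i).choose i : ℝ) * D i z) +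
        (∑ j ∈ Finset.range p, ((q - 1 + j).choose j : ℝ) * E j z) := by
    intro z
    have h := pf (p + q) p q rfl (by omega) (by omega) ((z.1 : ℝ) + 1) ((z.2 : ℝ) + 1)
      (by positivity) (by positivity)
    rw [one_div_mul_one_div]
    rw [show ((z.1 : ℝ) + 1) + ((z.2 : ℝ) + 1) = (z.1 : ℝ) + (z.2 : ℝ) + 2 by ring] at h
    exact h
  -- summability of each side
  have hsumRHS : Summable (fun z : ℕ × ℕ =>
      (∑ i ∈ Finset.range q, ((p - 1 + i).choose i : ℝ) * D i z) +
      (∑ j ∈ Finset.range p, ((q - 1 + j).choose j : ℝ) * E j z)) := by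
    refine Summable.add ?_ ?_
    · exact summable_sum (fun i hi => (hDsum i hi).mul_left _)
    · exact summable_sum (fun j hj => (hEsum j hj).mul_left _)
  have hΦ : Summable (fun z : ℕ × ℕ => (1 / ((z.1 : ℝ) + 1) ^ p) * (1 / ((z.2 : ℝ) + 1) ^ q)) :=
    hsumRHS.congr (fun z => (hpoint z).symm)
  -- zeta product as a double sum
  have step1 : zeta1 p * zeta1 q
      = ∑' z : ℕ × ℕ, (1 / ((z.1 : ℝ) + 1) ^ p) * (1 / ((z.2 : ℝ) + 1) ^ q) := by
    rw [zeta1, zeta1, ← tsum_mul_right]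
    rw [Summable.tsum_prod hΦ]
    exact tsum_congr (fun m => tsum_mul_left.symm)
  rw [step1, tsum_congr hpoint, Summable.tsum_add
      (summable_sum (fun i hi => (hDsum i hi).mul_left _))
      (summable_sum (fun j hj => (hEsum j hj).mul_left _)),
    Summable.tsum_finsetSum (fun i hi => (hDsum i hi).mul_left _),
    Summable.tsum_finsetSum (fun j hj => (hEsum j hj).mul_left _)]
  congr 1
  · refine Finset.sum_congr rfl (fun i hi => ?_)
    rw [tsum_mul_left]
    congr 1
    rw [zeta2, Summable.tsum_prod (hDsum i hi)]
  · refine Finset.sum_congr rfl (fun j hj => ?_)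
    rw [tsum_mul_left]
    congr 1
    rw [zeta2]
    have hswap := (Equiv.prodComm ℕ ℕ).tsum_eq (E j)
    rw [← hswap]
    have hsw : Summable (fun c : ℕ × ℕ => E j (c.2, c.1)) := by
      refine ((hEsum j hj).prod_symm).congr (fun z => ?_)
      rfl
    have h2 : ∑' (c : ℕ × ℕ), E j (c.2, c.1) = ∑' (a : ℕ) (b : ℕ), E j (b, a) := Summable.tsum_prod hsw
    have h3 : ∑' (a : ℕ) (b : ℕ), E j (b, a)
        = ∑' (a : ℕ) (b : ℕ), 1 / (((a : ℝ) + (b : ℝ) + 2) ^ (q + j) * ((b : ℝ) + 1) ^ (p - j)) := by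
      refine tsum_congr (fun a => tsum_congr (fun b => ?_))
      simp only [hE_def]
      ring_nf
    exact h2.trans h3
end

section
/- For integers p, r ≥ 2 and q ≥ 1, ζ(p)·ζ(r, q) = ∑_{i=0}^{r-1} C(p-1+i, i) ∑_{l,m,n≥1} 1/((l+m+n)^{p+i} (m+n)^{r-i} m^q) + ∑_{i=0}^{p-1} C(r-1+i, i) ∑_{l,m,n≥1} 1/((l+m+n)^{r+i} l^{p-i} m^q). -/
open Finset

lemma tele_s3 (r : ℕ) (u v : ℝ) (h : u + v = 1) : ∀ p : ℕ,
    ∑ i ∈ range (p+1), (((r+1+i).choose i : ℕ) : ℝ) * (v^(r+1+1) * u^i)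
      = ∑ i ∈ range (p+1), (((r+i).choose i : ℕ) : ℝ) * (v^(r+1) * u^i)
        - (((p+(r+1)).choose (r+1) : ℕ) : ℝ) * (u^(p+1) * v^(r+1)) := by
  intro p
  induction p with
  | zero =>
      simp only [sum_range_one, Nat.choose_zero_right, Nat.cast_one, pow_zero, mul_one, one_mul,
        Nat.zero_add, zero_add, Nat.choose_self]
      linear_combination v^(r+1)*h
  | succ p ih =>
      rw [sum_range_succ _ (p+1),
        sum_range_succ (fun i => (((r+i).choose i : ℕ) : ℝ) * (v^(r+1) * u^i)) (p+1), ih]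
      have hsym : ∀ n k : ℕ, k ≤ n → (n.choose k) = (n.choose (n-k)) := fun n k hk =>
        (Nat.choose_symm hk).symm
      have e1 : (((r+1+(p+1)).choose (p+1) : ℕ) : ℝ)
          = (((p+(r+1)).choose (r+1) : ℕ) : ℝ) + (((r+(p+1)).choose (p+1) : ℕ) : ℝ) := by
        have hs : (p+(r+1)).choose (r+1) = (r+p+1).choose p := by
          have := Nat.choose_symm (n := r+p+1) (k := p) (by omega)
          rw [show r+p+1-p = r+1 by omega] at this
          rw [show p+(r+1) = r+p+1 by omega, ← this]
        have hpas : (r+1+(p+1)).choose (p+1) = (r+p+1).choose p + (r+p+1).choose (p+1) := by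
          rw [show r+1+(p+1) = (r+p+1)+1 by omega]
          exact Nat.choose_succ_succ' (r+p+1) p
        rw [hs, hpas, show r+(p+1) = r+p+1 by omega]
        push_cast; ring
      have e4 : (((p+1+(r+1)).choose (r+1) : ℕ) : ℝ)
          = (((p+(r+1)).choose (r+1) : ℕ) : ℝ) + (((r+(p+1)).choose (p+1) : ℕ) : ℝ) := by
        have hcc : (p+1+(r+1)).choose (r+1) = (r+1+(p+1)).choose (p+1) := by
          rw [show p+1+(r+1) = r+1+(p+1) by omega]
          have := Nat.choose_symm (n := r+1+(p+1)) (k := p+1) (by omega)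
          rw [show r+1+(p+1)-(p+1) = r+1 by omega] at this
          omega
        rw [hcc]
        exact e1
      linear_combination (v^(r+1+1) * u^(p+1)) * e1 + (u^(p+1+1) * v^(r+1)) * e4 +
        ((((p+(r+1)).choose (r+1) : ℕ) : ℝ) + (((r+(p+1)).choose (p+1) : ℕ) : ℝ))
          * (u^(p+1) * v^(r+1)) * h

lemma keyP (p : ℕ) (u v : ℝ) (h : u + v = 1) : ∀ r : ℕ,
    ∑ i ∈ range (r+1), (((p+i).choose i : ℕ) : ℝ) * (u^(p+1) * v^i)
      + ∑ i ∈ range (p+1), (((r+i).choose i : ℕ) : ℝ) * (v^(r+1) * u^i) = 1 := by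
  intro r
  induction r with
  | zero =>
      simp only [zero_add, sum_range_one, Nat.choose_self, Nat.cast_one, Nat.add_zero,
        Nat.choose_zero_right, pow_zero, mul_one, Nat.zero_add, pow_one, one_mul]
      have hg := geom_sum_mul u (p+1)
      rw [← Finset.mul_sum]
      linear_combination -hg + (∑ i ∈ range (p+1), u ^ i) * h
  | succ r ih =>
      rw [sum_range_succ _ (r+1), tele_s3 r u v h p]
      linear_combination ih

lemma partialFrac (p r : ℕ) (x y : ℝ) (hx : 0 < x) (hy : 0 < y) :
    1 / (x^(p+1) * y^(r+1)) =
      ∑ i ∈ Finset.range (r+1), (((p+i).choose i : ℕ) : ℝ) *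
        (1 / ((x+y)^(p+1+i) * y^(r+1-i)))
    + ∑ i ∈ Finset.range (p+1), (((r+i).choose i : ℕ) : ℝ) *
        (1 / ((x+y)^(r+1+i) * x^(p+1-i))) := by
  have hs : 0 < x + y := by linarith
  have key := keyP p (x/(x+y)) (y/(x+y)) (by field_simp) r
  have t1 : ∀ i ∈ Finset.range (r+1),
      (((p+i).choose i : ℕ) : ℝ) * (1 / ((x+y)^(p+1+i) * y^(r+1-i)))
        = ((((p+i).choose i : ℕ) : ℝ) * ((x/(x+y))^(p+1) * (y/(x+y))^i))
            * (1 / (x^(p+1) * y^(r+1))) := by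
    intro i hi
    rw [Finset.mem_range] at hi
    have hyr : y^(r+1) = y^(r+1-i) * y^i := by
      rw [← pow_add]; congr 1; omega
    rw [hyr, div_pow, div_pow]
    rw [show p+1+i = (p+1)+i from rfl, pow_add]
    field_simp
  have t2 : ∀ i ∈ Finset.range (p+1),
      (((r+i).choose i : ℕ) : ℝ) * (1 / ((x+y)^(r+1+i) * x^(p+1-i)))
        = ((((r+i).choose i : ℕ) : ℝ) * ((y/(x+y))^(r+1) * (x/(x+y))^i))
            * (1 / (x^(p+1) * y^(r+1))) := by
    intro i hi
    rw [Finset.mem_range] at hi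
    have hxp : x^(p+1) = x^(p+1-i) * x^i := by
      rw [← pow_add]; congr 1; omega
    rw [hxp, div_pow, div_pow]
    rw [show r+1+i = (r+1)+i from rfl, pow_add]
    field_simp
  rw [Finset.sum_congr rfl t1, Finset.sum_congr rfl t2, ← Finset.sum_mul, ← Finset.sum_mul,
    ← add_mul, key, one_mul]

lemma summable_shift (p : ℕ) (hp : 2 ≤ p) : Summable (fun n : ℕ => 1/((n:ℝ)+1)^p) := by
  have h0 := (Real.summable_one_div_nat_pow (p := p)).mpr (by omega)
  have h2 := (summable_nat_add_iff 1).mpr h0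
  exact h2.congr fun n => by push_cast; ring

lemma sec_summable (r q b : ℕ) (hr : 2 ≤ r) :
    Summable (fun a : ℕ => 1/(((a:ℝ)+(b:ℝ)+2)^r * ((b:ℝ)+1)^q)) := by
  refine Summable.of_nonneg_of_le (fun a => by positivity)
    (fun a => ?_) (((summable_shift 2 le_rfl)).mul_right (1/((b:ℝ)+1)^q))
  have h1 : ((a:ℝ)+1)^2 * ((b:ℝ)+1)^q ≤ ((a:ℝ)+(b:ℝ)+2)^r * ((b:ℝ)+1)^q := by
    have hb : (0:ℝ) ≤ (b:ℝ) := Nat.cast_nonneg b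
    have ha : (0:ℝ) ≤ (a:ℝ) := Nat.cast_nonneg a
    have h2 : ((a:ℝ)+1)^2 ≤ ((a:ℝ)+(b:ℝ)+2)^2 := by nlinarith
    have h3 : ((a:ℝ)+(b:ℝ)+2)^2 ≤ ((a:ℝ)+(b:ℝ)+2)^r :=
      pow_le_pow_right₀ (by linarith) hr
    nlinarith [pow_nonneg (by linarith : (0:ℝ) ≤ (b:ℝ)+1) q]
  calc 1/(((a:ℝ)+(b:ℝ)+2)^r * ((b:ℝ)+1)^q) ≤ 1/(((a:ℝ)+1)^2 * ((b:ℝ)+1)^q) := by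
        apply one_div_le_one_div_of_le (by positivity) h1
    _ = 1/((a:ℝ)+1)^2 * (1/((b:ℝ)+1)^q) := by rw [one_div_mul_one_div]

lemma sec_tsum_le (r q b : ℕ) (hr : 2 ≤ r) :
    ∑' a : ℕ, 1/(((a:ℝ)+(b:ℝ)+2)^r * ((b:ℝ)+1)^q) ≤ 1/((b:ℝ)+1)^(q+1) := by
  apply Real.tsum_le_of_sum_range_le (fun a => by positivity)
  intro N
  have hb : (0:ℝ) ≤ (b:ℝ) := Nat.cast_nonneg b
  have key : ∀ a : ℕ, 1/(((a:ℝ)+(b:ℝ)+2)^r * ((b:ℝ)+1)^q)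
      ≤ (1/((b:ℝ)+1)^q) * (1/((a:ℝ)+(b:ℝ)+1) - 1/((a:ℝ)+(b:ℝ)+2)) := by
    intro a
    have ha : (0:ℝ) ≤ (a:ℝ) := Nat.cast_nonneg a
    have e1 : 1/((a:ℝ)+(b:ℝ)+1) - 1/((a:ℝ)+(b:ℝ)+2)
        = 1/(((a:ℝ)+(b:ℝ)+1) * ((a:ℝ)+(b:ℝ)+2)) := by
      rw [div_sub_div _ _ (by linarith) (by linarith)]
      ring_nf
    rw [e1, one_div_mul_one_div]
    apply one_div_le_one_div_of_le (by positivity)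
    have h3 : ((a:ℝ)+(b:ℝ)+1) * ((a:ℝ)+(b:ℝ)+2) ≤ ((a:ℝ)+(b:ℝ)+2)^r := by
      calc ((a:ℝ)+(b:ℝ)+1) * ((a:ℝ)+(b:ℝ)+2) ≤ ((a:ℝ)+(b:ℝ)+2)^2 := by nlinarith
        _ ≤ ((a:ℝ)+(b:ℝ)+2)^r := pow_le_pow_right₀ (by linarith) hr
    have h4 : (0:ℝ) < ((b:ℝ)+1)^q := by positivity
    calc ((b:ℝ)+1)^q * (((a:ℝ)+(b:ℝ)+1) * ((a:ℝ)+(b:ℝ)+2))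
        ≤ ((b:ℝ)+1)^q * ((a:ℝ)+(b:ℝ)+2)^r := by nlinarith
      _ = ((a:ℝ)+(b:ℝ)+2)^r * ((b:ℝ)+1)^q := by ring
  calc ∑ a ∈ range N, 1/(((a:ℝ)+(b:ℝ)+2)^r * ((b:ℝ)+1)^q)
      ≤ ∑ a ∈ range N, (1/((b:ℝ)+1)^q) * (1/((a:ℝ)+(b:ℝ)+1) - 1/((a:ℝ)+(b:ℝ)+2)) :=
        Finset.sum_le_sum fun a _ => key a
    _ = (1/((b:ℝ)+1)^q) * ∑ a ∈ range N, (1/((a:ℝ)+(b:ℝ)+1) - 1/((a:ℝ)+(b:ℝ)+2)) := by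
        rw [Finset.mul_sum]
    _ ≤ 1/((b:ℝ)+1)^(q+1) := by
        have e2 : ∑ a ∈ range N, (1/((a:ℝ)+(b:ℝ)+1) - 1/((a:ℝ)+(b:ℝ)+2))
            = 1/((b:ℝ)+1) - 1/((N:ℝ)+(b:ℝ)+1) := by
          calc ∑ a ∈ range N, (1/((a:ℝ)+(b:ℝ)+1) - 1/((a:ℝ)+(b:ℝ)+2))
              = ∑ a ∈ range N, ((fun a : ℕ => 1/((a:ℝ)+(b:ℝ)+1)) a
                  - (fun a : ℕ => 1/((a:ℝ)+(b:ℝ)+1)) (a+1)) := by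
                apply Finset.sum_congr rfl
                intro a _
                simp only
                congr 2
                push_cast
                ring
            _ = 1/(((0:ℕ):ℝ)+(b:ℝ)+1) - 1/((N:ℝ)+(b:ℝ)+1) :=
                Finset.sum_range_sub' (fun a : ℕ => 1/((a:ℝ)+(b:ℝ)+1)) N
            _ = 1/((b:ℝ)+1) - 1/((N:ℝ)+(b:ℝ)+1) := by norm_num
        rw [e2, pow_succ, ← one_div_mul_one_div]
        have hN : (0:ℝ) < (N:ℝ)+(b:ℝ)+1 := by positivity
        have h6 : 1/((b:ℝ)+1) - 1/((N:ℝ)+(b:ℝ)+1) ≤ 1/((b:ℝ)+1) := by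
          have : 0 < 1/((N:ℝ)+(b:ℝ)+1) := by positivity
          linarith
        have h5 : (0:ℝ) ≤ 1/((b:ℝ)+1)^q := by positivity
        exact mul_le_mul_of_nonneg_left h6 h5

lemma g_summable (r q : ℕ) (hr : 2 ≤ r) (hq : 1 ≤ q) :
    Summable (fun w : ℕ × ℕ => 1/(((w.1:ℝ)+(w.2:ℝ)+2)^r * ((w.2:ℝ)+1)^q)) := by
  have h := (summable_prod_of_nonneg (f := fun w : ℕ × ℕ =>
      1/(((w.2:ℝ)+(w.1:ℝ)+2)^r * ((w.1:ℝ)+1)^q)) (fun w => by positivity)).mpr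
    ⟨fun b => sec_summable r q b hr, ?_⟩
  · exact h.prod_symm.congr fun w => rfl
  · refine Summable.of_nonneg_of_le (fun b => tsum_nonneg fun a => by positivity)
      (fun b => sec_tsum_le r q b hr) ?_
    exact summable_shift (q+1) (by omega)

lemma nest1 {F : ℕ × ℕ × ℕ → ℝ} (hF : Summable F) (l m : ℕ) :
    Summable fun n => F (l, m, n) := (hF.prod_factor l).prod_factor m

lemma nest2 {F : ℕ × ℕ × ℕ → ℝ} (hF : Summable F) (l : ℕ) :
    Summable fun m => ∑' n, F (l, m, n) := (hF.prod_factor l).prod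

lemma nest3 {F : ℕ × ℕ × ℕ → ℝ} (hF : Summable F) :
    Summable fun l => ∑' (m : ℕ) (n : ℕ), F (l, m, n) :=
  hF.prod.congr fun l => Summable.tsum_prod (hF.prod_factor l)

lemma tsum3_sum {s : Finset ℕ} {F : ℕ → ℕ × ℕ × ℕ → ℝ} (h : ∀ i ∈ s, Summable (F i)) :
    (∑' (l : ℕ) (m : ℕ) (n : ℕ), ∑ i ∈ s, F i (l, m, n))
      = ∑ i ∈ s, ∑' (l : ℕ) (m : ℕ) (n : ℕ), F i (l, m, n) :=
  calc (∑' (l : ℕ) (m : ℕ) (n : ℕ), ∑ i ∈ s, F i (l, m, n))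
      = ∑' (l : ℕ) (m : ℕ), ∑ i ∈ s, ∑' (n : ℕ), F i (l, m, n) :=
        tsum_congr fun l => tsum_congr fun m => Summable.tsum_finsetSum fun i hi => nest1 (h i hi) l m
    _ = ∑' (l : ℕ), ∑ i ∈ s, ∑' (m : ℕ) (n : ℕ), F i (l, m, n) :=
        tsum_congr fun l => Summable.tsum_finsetSum fun i hi => nest2 (h i hi) l
    _ = ∑ i ∈ s, ∑' (l : ℕ) (m : ℕ) (n : ℕ), F i (l, m, n) :=
        Summable.tsum_finsetSum fun i hi => nest3 (h i hi)

lemma tsum3_add {F G : ℕ × ℕ × ℕ → ℝ} (hF : Summable F) (hG : Summable G) :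
    (∑' (l : ℕ) (m : ℕ) (n : ℕ), (F (l, m, n) + G (l, m, n)))
      = (∑' (l : ℕ) (m : ℕ) (n : ℕ), F (l, m, n))
        + ∑' (l : ℕ) (m : ℕ) (n : ℕ), G (l, m, n) :=
  calc (∑' (l : ℕ) (m : ℕ) (n : ℕ), (F (l, m, n) + G (l, m, n)))
      = ∑' (l : ℕ) (m : ℕ), ((∑' n : ℕ, F (l, m, n)) + ∑' n : ℕ, G (l, m, n)) :=
        tsum_congr fun l => tsum_congr fun m => Summable.tsum_add (nest1 hF l m) (nest1 hG l m)
    _ = ∑' (l : ℕ), ((∑' (m : ℕ) (n : ℕ), F (l, m, n)) + ∑' (m : ℕ) (n : ℕ), G (l, m, n)) :=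
        tsum_congr fun l => Summable.tsum_add (nest2 hF l) (nest2 hG l)
    _ = _ := Summable.tsum_add (nest3 hF) (nest3 hG)

lemma tsum3_mul_left (C : ℝ) (h : ℕ → ℕ → ℕ → ℝ) :
    (∑' (l : ℕ) (m : ℕ) (n : ℕ), C * h l m n)
      = C * ∑' (l : ℕ) (m : ℕ) (n : ℕ), h l m n := by
  rw [← tsum_mul_left]
  refine tsum_congr fun l => ?_
  rw [← tsum_mul_left]
  refine tsum_congr fun m => ?_
  rw [← tsum_mul_left]

theorem shuffle_decomposition_A3 (p r q : ℕ) (hp : 2 ≤ p) (hr : 2 ≤ r) (hq : 1 ≤ q) :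
    zeta1 p * zeta2 r q =
      (∑ i ∈ Finset.range r, (Nat.choose (p - 1 + i) i : ℝ) *
        ∑' (l : ℕ) (m : ℕ) (n : ℕ),
          1 / (((l : ℝ) + (m : ℝ) + (n : ℝ) + 3) ^ (p + i) *
               ((m : ℝ) + (n : ℝ) + 2) ^ (r - i) * ((m : ℝ) + 1) ^ q)) +
      (∑ i ∈ Finset.range p, (Nat.choose (r - 1 + i) i : ℝ) *
        ∑' (l : ℕ) (m : ℕ) (n : ℕ),
          1 / (((l : ℝ) + (m : ℝ) + (n : ℝ) + 3) ^ (r + i) *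
               ((l : ℝ) + 1) ^ (p - i) * ((m : ℝ) + 1) ^ q)) := by
  obtain ⟨P, rfl⟩ : ∃ P, p = P + 1 := ⟨p - 1, by omega⟩
  obtain ⟨R, rfl⟩ : ∃ R, r = R + 1 := ⟨r - 1, by omega⟩
  simp only [Nat.add_sub_cancel]
  have hf : Summable (fun l : ℕ => 1/((l:ℝ)+1)^(P+1)) := summable_shift _ (by omega)
  have hg : Summable (fun w : ℕ × ℕ => 1/(((w.1:ℝ)+(w.2:ℝ)+2)^(R+1) * ((w.2:ℝ)+1)^q)) :=
    g_summable _ _ (by omega) hq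
  have hg' : Summable (fun w : ℕ × ℕ => 1/(((w.2:ℝ)+(w.1:ℝ)+2)^(R+1) * ((w.1:ℝ)+1)^q)) :=
    hg.prod_symm.congr fun w => rfl
  have hP : Summable (fun v : ℕ × ℕ × ℕ =>
      (1/((v.1:ℝ)+1)^(P+1)) * (1/(((v.2.2:ℝ)+(v.2.1:ℝ)+2)^(R+1) * ((v.2.1:ℝ)+1)^q))) := by
    have := hf.mul_of_nonneg hg' (Pi.le_def.mpr fun l => by positivity)
      (Pi.le_def.mpr fun w => by positivity)
    exact this.congr fun v => rfl
  have hpt : ∀ l m n : ℕ,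
      (1/((l:ℝ)+1)^(P+1)) * (1/(((n:ℝ)+(m:ℝ)+2)^(R+1) * ((m:ℝ)+1)^q))
        = (∑ i ∈ Finset.range (R+1), (((P+i).choose i : ℕ) : ℝ) *
            (1 / (((l:ℝ)+(m:ℝ)+(n:ℝ)+3)^(P+1+i) * ((m:ℝ)+(n:ℝ)+2)^(R+1-i) * ((m:ℝ)+1)^q)))
          + (∑ i ∈ Finset.range (P+1), (((R+i).choose i : ℕ) : ℝ) *
            (1 / (((l:ℝ)+(m:ℝ)+(n:ℝ)+3)^(R+1+i) * ((l:ℝ)+1)^(P+1-i) * ((m:ℝ)+1)^q))) := by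
    intro l m n
    have pf := partialFrac P R ((l:ℝ)+1) ((m:ℝ)+(n:ℝ)+2) (by positivity) (by positivity)
    rw [show ((l:ℝ)+1) + ((m:ℝ)+(n:ℝ)+2) = (l:ℝ)+(m:ℝ)+(n:ℝ)+3 by ring] at pf
    calc (1/((l:ℝ)+1)^(P+1)) * (1/(((n:ℝ)+(m:ℝ)+2)^(R+1) * ((m:ℝ)+1)^q))
        = (1/(((l:ℝ)+1)^(P+1) * ((m:ℝ)+(n:ℝ)+2)^(R+1))) * (1/((m:ℝ)+1)^q) := by
          rw [show ((n:ℝ)+(m:ℝ)+2) = ((m:ℝ)+(n:ℝ)+2) by ring]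
          rw [one_div_mul_one_div, one_div_mul_one_div]
          ring_nf
      _ = ((∑ i ∈ Finset.range (R+1), (((P+i).choose i : ℕ) : ℝ) *
              (1 / (((l:ℝ)+(m:ℝ)+(n:ℝ)+3)^(P+1+i) * ((m:ℝ)+(n:ℝ)+2)^(R+1-i))))
            + (∑ i ∈ Finset.range (P+1), (((R+i).choose i : ℕ) : ℝ) *
              (1 / (((l:ℝ)+(m:ℝ)+(n:ℝ)+3)^(R+1+i) * ((l:ℝ)+1)^(P+1-i))))) * (1/((m:ℝ)+1)^q) := by
          rw [pf]
      _ = _ := by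
          rw [add_mul, Finset.sum_mul, Finset.sum_mul]
          congr 1 <;> refine Finset.sum_congr rfl fun i hi => ?_ <;>
            rw [mul_assoc, one_div_mul_one_div, mul_assoc]
  have hGsum : ∀ i ∈ Finset.range (R+1), Summable (fun v : ℕ × ℕ × ℕ =>
      (((P+i).choose i : ℕ) : ℝ) *
        (1 / (((v.1:ℝ)+(v.2.1:ℝ)+(v.2.2:ℝ)+3)^(P+1+i) *
          ((v.2.1:ℝ)+(v.2.2:ℝ)+2)^(R+1-i) * ((v.2.1:ℝ)+1)^q))) := by
    intro i hi
    refine Summable.of_nonneg_of_le (fun v => by positivity) (fun v => ?_) hP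
    calc (((P+i).choose i : ℕ) : ℝ) *
          (1 / (((v.1:ℝ)+(v.2.1:ℝ)+(v.2.2:ℝ)+3)^(P+1+i) *
            ((v.2.1:ℝ)+(v.2.2:ℝ)+2)^(R+1-i) * ((v.2.1:ℝ)+1)^q))
        ≤ ∑ j ∈ Finset.range (R+1), (((P+j).choose j : ℕ) : ℝ) *
            (1 / (((v.1:ℝ)+(v.2.1:ℝ)+(v.2.2:ℝ)+3)^(P+1+j) *
              ((v.2.1:ℝ)+(v.2.2:ℝ)+2)^(R+1-j) * ((v.2.1:ℝ)+1)^q)) :=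
          Finset.single_le_sum (f := fun j => (((P+j).choose j : ℕ) : ℝ) *
            (1 / (((v.1:ℝ)+(v.2.1:ℝ)+(v.2.2:ℝ)+3)^(P+1+j) *
              ((v.2.1:ℝ)+(v.2.2:ℝ)+2)^(R+1-j) * ((v.2.1:ℝ)+1)^q)))
            (fun j _ => by positivity) hi
      _ ≤ _ + (∑ j ∈ Finset.range (P+1), (((R+j).choose j : ℕ) : ℝ) *
            (1 / (((v.1:ℝ)+(v.2.1:ℝ)+(v.2.2:ℝ)+3)^(R+1+j) *
              ((v.1:ℝ)+1)^(P+1-j) * ((v.2.1:ℝ)+1)^q))) :=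
          le_add_of_nonneg_right (Finset.sum_nonneg fun j _ => by positivity)
      _ = _ := (hpt v.1 v.2.1 v.2.2).symm
  have hHsum : ∀ i ∈ Finset.range (P+1), Summable (fun v : ℕ × ℕ × ℕ =>
      (((R+i).choose i : ℕ) : ℝ) *
        (1 / (((v.1:ℝ)+(v.2.1:ℝ)+(v.2.2:ℝ)+3)^(R+1+i) *
          ((v.1:ℝ)+1)^(P+1-i) * ((v.2.1:ℝ)+1)^q))) := by
    intro i hi
    refine Summable.of_nonneg_of_le (fun v => by positivity) (fun v => ?_) hP
    calc (((R+i).choose i : ℕ) : ℝ) *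
          (1 / (((v.1:ℝ)+(v.2.1:ℝ)+(v.2.2:ℝ)+3)^(R+1+i) *
            ((v.1:ℝ)+1)^(P+1-i) * ((v.2.1:ℝ)+1)^q))
        ≤ ∑ j ∈ Finset.range (P+1), (((R+j).choose j : ℕ) : ℝ) *
            (1 / (((v.1:ℝ)+(v.2.1:ℝ)+(v.2.2:ℝ)+3)^(R+1+j) *
              ((v.1:ℝ)+1)^(P+1-j) * ((v.2.1:ℝ)+1)^q)) :=
          Finset.single_le_sum (f := fun j => (((R+j).choose j : ℕ) : ℝ) *
            (1 / (((v.1:ℝ)+(v.2.1:ℝ)+(v.2.2:ℝ)+3)^(R+1+j) *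
              ((v.1:ℝ)+1)^(P+1-j) * ((v.2.1:ℝ)+1)^q)))
            (fun j _ => by positivity) hi
      _ ≤ (∑ j ∈ Finset.range (R+1), (((P+j).choose j : ℕ) : ℝ) *
            (1 / (((v.1:ℝ)+(v.2.1:ℝ)+(v.2.2:ℝ)+3)^(P+1+j) *
              ((v.2.1:ℝ)+(v.2.2:ℝ)+2)^(R+1-j) * ((v.2.1:ℝ)+1)^q))) + _ :=
          le_add_of_nonneg_left (Finset.sum_nonneg fun j _ => by positivity)
      _ = _ := (hpt v.1 v.2.1 v.2.2).symm
  rw [zeta1, zeta2]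
  have swap : (∑' (a : ℕ) (b : ℕ), 1 / (((a:ℝ)+(b:ℝ)+2)^(R+1) * ((b:ℝ)+1)^q))
      = ∑' (m : ℕ) (n : ℕ), 1/(((n:ℝ)+(m:ℝ)+2)^(R+1) * ((m:ℝ)+1)^q) :=
    (Summable.tsum_comm (f := fun a b : ℕ => 1/(((a:ℝ)+(b:ℝ)+2)^(R+1) * ((b:ℝ)+1)^q))
      (hg.congr fun w => rfl)).symm
  rw [swap, ← tsum_mul_right]
  calc ∑' (l : ℕ), (1/((l:ℝ)+1)^(P+1) *
          ∑' (m : ℕ) (n : ℕ), 1/(((n:ℝ)+(m:ℝ)+2)^(R+1) * ((m:ℝ)+1)^q))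
      = ∑' (l : ℕ) (m : ℕ) (n : ℕ),
          (1/((l:ℝ)+1)^(P+1)) * (1/(((n:ℝ)+(m:ℝ)+2)^(R+1) * ((m:ℝ)+1)^q)) := by
        refine tsum_congr fun l => ?_
        rw [← tsum_mul_left]
        exact tsum_congr fun m => (tsum_mul_left).symm
    _ = ∑' (l : ℕ) (m : ℕ) (n : ℕ),
          ((∑ i ∈ Finset.range (R+1), (((P+i).choose i : ℕ) : ℝ) *
            (1 / (((l:ℝ)+(m:ℝ)+(n:ℝ)+3)^(P+1+i) * ((m:ℝ)+(n:ℝ)+2)^(R+1-i) * ((m:ℝ)+1)^q)))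
          + (∑ i ∈ Finset.range (P+1), (((R+i).choose i : ℕ) : ℝ) *
            (1 / (((l:ℝ)+(m:ℝ)+(n:ℝ)+3)^(R+1+i) * ((l:ℝ)+1)^(P+1-i) * ((m:ℝ)+1)^q)))) :=
        tsum_congr fun l => tsum_congr fun m => tsum_congr fun n => hpt l m n
    _ = (∑' (l : ℕ) (m : ℕ) (n : ℕ),
          ∑ i ∈ Finset.range (R+1), (((P+i).choose i : ℕ) : ℝ) *
            (1 / (((l:ℝ)+(m:ℝ)+(n:ℝ)+3)^(P+1+i) * ((m:ℝ)+(n:ℝ)+2)^(R+1-i) * ((m:ℝ)+1)^q)))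
        + ∑' (l : ℕ) (m : ℕ) (n : ℕ),
          ∑ i ∈ Finset.range (P+1), (((R+i).choose i : ℕ) : ℝ) *
            (1 / (((l:ℝ)+(m:ℝ)+(n:ℝ)+3)^(R+1+i) * ((l:ℝ)+1)^(P+1-i) * ((m:ℝ)+1)^q)) :=
        tsum3_add (summable_sum hGsum) (summable_sum hHsum)
    _ = (∑ i ∈ Finset.range (R+1), ∑' (l : ℕ) (m : ℕ) (n : ℕ),
          (((P+i).choose i : ℕ) : ℝ) *
            (1 / (((l:ℝ)+(m:ℝ)+(n:ℝ)+3)^(P+1+i) * ((m:ℝ)+(n:ℝ)+2)^(R+1-i) * ((m:ℝ)+1)^q)))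
        + ∑ i ∈ Finset.range (P+1), ∑' (l : ℕ) (m : ℕ) (n : ℕ),
          (((R+i).choose i : ℕ) : ℝ) *
            (1 / (((l:ℝ)+(m:ℝ)+(n:ℝ)+3)^(R+1+i) * ((l:ℝ)+1)^(P+1-i) * ((m:ℝ)+1)^q)) := by
        rw [tsum3_sum hGsum, tsum3_sum hHsum]
    _ = _ := by
        congr 1 <;> refine Finset.sum_congr rfl fun i hi => ?_ <;>
          exact tsum3_mul_left _ _
end

section
/- In the non-commutative polynomial algebra ℚ⟨x, y⟩ with the shuffle product ш defined recursively by 1 ш w = w ш 1 = w and (u₁ w₁) ш (u₂ w₂) = u₁(w₁ ш u₂ w₂) + u₂(u₁ w₁ ш w₂) for letters u₁, u₂ ∈ {x, y}, writing z_p = x^{p-1} y, one has for all positive integers a, b and all positive integers p₁, …, p_a, q₁, …, q_b: z_{p_a} ⋯ z_{p_1} ш z_{q_b} ⋯ z_{q_1} = ∑_{τ=0}^{q_b - 1} C(p_a - 1 + τ, τ) z_{p_a + τ} (z_{p_{a-1}} ⋯ z_{p_1} ш z_{q_b - τ} z_{q_{b-1}} ⋯ z_{q_1}) + ∑_{τ=0}^{p_a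 - 1} C(q_b - 1 + τ, τ) z_{q_b + τ} (z_{p_a - τ} z_{p_{a-1}} ⋯ z_{p_1} ш z_{q_{b-1}} ⋯ z_{q_1}). -/
/-- Words in the two letters `x` (encoded `true`) and `y` (encoded `false`). -/
abbrev Word : Type := List Bool

/-- The shuffle product on ℚ⟨x,y⟩, realized as the monoid algebra of words
with values in `Word →₀ ℚ`, defined recursively on words by
`1 ш w = w ш 1 = w` and `(u₁ w₁) ш (u₂ w₂) = u₁(w₁ ш u₂ w₂) + u₂(u₁ w₁ ш w₂)`. -/
noncomputable def sh : Word → Word → (Word →₀ ℚ)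
  | [], w => Finsupp.single w 1
  | (a :: w₁), [] => Finsupp.single (a :: w₁) 1
  | (a :: w₁), (b :: w₂) =>
      Finsupp.mapDomain (a :: ·) (sh w₁ (b :: w₂)) +
      Finsupp.mapDomain (b :: ·) (sh (a :: w₁) w₂)
  termination_by w v => w.length + v.length

/-- The word `z_p = x^{p-1} y`. -/
def zw (p : ℕ) : Word := List.replicate (p - 1) true ++ [false]

/-- The word `z_{k_1} z_{k_2} ⋯ z_{k_n}` for a list of exponents `[k_1, …, k_n]`. -/
def wordOf (L : List ℕ) : Word := (L.map zw).flatten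

lemma zw_one : zw 1 = [false] := rfl

lemma zw_succ (k : ℕ) (hk : 1 ≤ k) : zw (k+1) = true :: zw k := by
  obtain ⟨k, rfl⟩ := Nat.exists_eq_add_of_le hk
  simp [zw, Nat.add_comm 1 k, List.replicate_succ]

lemma sh_cons (a b : Bool) (w₁ w₂ : Word) :
    sh (a :: w₁) (b :: w₂) =
      Finsupp.mapDomain (a :: ·) (sh w₁ (b :: w₂)) +
      Finsupp.mapDomain (b :: ·) (sh (a :: w₁) w₂) := by
  rw [sh]

lemma mD_true (k : ℕ) (hk : 1 ≤ k) (v : Word →₀ ℚ) :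
    Finsupp.mapDomain (true :: ·) (Finsupp.mapDomain (fun w => zw k ++ w) v) =
      Finsupp.mapDomain (fun w => zw (k+1) ++ w) v := by
  rw [← Finsupp.mapDomain_comp]
  congr 1
  funext w
  simp [Function.comp, zw_succ k hk]

lemma sum_pascal (P Q : ℕ) (X : ℕ → (Word →₀ ℚ)) :
    (∑ τ ∈ Finset.range (Q+1+1), (Nat.choose (P+1+τ) τ : ℚ) • X τ) =
      (∑ τ ∈ Finset.range (Q+1+1), (Nat.choose (P+τ) τ : ℚ) • X τ) +
      (∑ τ ∈ Finset.range (Q+1), (Nat.choose (P+1+τ) τ : ℚ) • X (τ+1)) := by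
  rw [Finset.sum_range_succ' (fun τ => (Nat.choose (P+1+τ) τ : ℚ) • X τ) (Q+1),
    Finset.sum_range_succ' (fun τ => (Nat.choose (P+τ) τ : ℚ) • X τ) (Q+1)]
  have h : ∀ τ : ℕ, ((Nat.choose (P+1+(τ+1)) (τ+1) : ℚ)) • X (τ+1) =
      (Nat.choose (P+(τ+1)) (τ+1) : ℚ) • X (τ+1) + (Nat.choose (P+1+τ) τ : ℚ) • X (τ+1) := by
    intro τ
    rw [← add_smul]
    congr 1
    rw [show P+1+(τ+1) = (P+τ+1)+1 by ring, Nat.choose_succ_succ]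
    push_cast
    rw [show P+(τ+1) = P+τ+1 by ring, show P+1+τ = P+τ+1 by ring]
    ring
  simp only [h]
  rw [Finset.sum_add_distrib]
  simp
  abel

lemma key : ∀ (n p q : ℕ), p + q ≤ n → 1 ≤ p → 1 ≤ q → ∀ W₁ W₂ : Word,
    sh (zw p ++ W₁) (zw q ++ W₂) =
      (∑ τ ∈ Finset.range q, (Nat.choose (p - 1 + τ) τ : ℚ) •
        Finsupp.mapDomain (fun w => zw (p + τ) ++ w) (sh W₁ (zw (q - τ) ++ W₂))) +
      (∑ τ ∈ Finset.range p, (Nat.choose (q - 1 + τ) τ : ℚ) •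
        Finsupp.mapDomain (fun w => zw (q + τ) ++ w) (sh (zw (p - τ) ++ W₁) W₂)) := by
  intro n
  induction n with
  | zero => intro p q hn hp hq; omega
  | succ n IH =>
    rintro (_|P) q hn hp hq W₁ W₂
    · omega
    rcases q with _|q
    · omega
    match P, q with
    | 0, 0 =>
      norm_num [Finset.sum_range_one, zw_one, List.singleton_append, sh_cons]
    | 0, Q+1 =>
      norm_num
      have hIH := IH 1 (Q+1) (by omega) (by omega) (by omega) W₁ W₂
      norm_num at hIH
      simp only [show zw 1 ++ W₁ = false :: W₁ from rfl] at hIH ⊢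
      rw [show zw (Q+1+1) ++ W₂ = true :: (zw (Q+1) ++ W₂) by rw [zw_succ _ (by omega)]; rfl]
      rw [sh_cons, hIH]
      simp only [Finsupp.mapDomain_add, Finsupp.mapDomain_finset_sum]
      have hmt : ∀ (k:ℕ) (hk : 1 ≤ k) (v : Word →₀ ℚ), Finsupp.mapDomain (fun x => true :: x)
          (Finsupp.mapDomain (fun w => zw k ++ w) v) = Finsupp.mapDomain (fun w => zw (k+1) ++ w) v :=
        fun k hk v => mD_true k hk v
      rw [Finset.sum_congr rfl (fun x _ => hmt (1+x) (by omega) _), hmt (Q+1) (by omega)]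
      conv_rhs => rw [Finset.sum_range_succ']
      simp only [show ∀ x:ℕ, (1:ℕ)+(x+1) = 1+x+1 from fun x => rfl,
        show ∀ x:ℕ, Q+1+1-(x+1) = Q+1-x from fun x => by omega,
        Nat.add_zero, Nat.sub_zero]
      rw [show zw (Q+1+1) ++ W₂ = true :: (zw (Q+1) ++ W₂) by rw [zw_succ _ (by omega)]; rfl]
      rw [show (fun w => zw 1 ++ w : Word → Word) = (fun x => false :: x) from rfl]
      abel
    | P+1, 0 =>
      norm_num
      have hIH := IH (P+1) 1 (by omega) (by omega) (by omega) W₁ W₂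
      norm_num at hIH
      simp only [show zw 1 ++ W₂ = false :: W₂ from rfl] at hIH ⊢
      rw [show zw (P+1+1) ++ W₁ = true :: (zw (P+1) ++ W₁) by rw [zw_succ _ (by omega)]; rfl]
      rw [sh_cons, hIH]
      simp only [Finsupp.mapDomain_add, Finsupp.mapDomain_finset_sum]
      have hmt : ∀ (k:ℕ) (hk : 1 ≤ k) (v : Word →₀ ℚ), Finsupp.mapDomain (fun x => true :: x)
          (Finsupp.mapDomain (fun w => zw k ++ w) v) = Finsupp.mapDomain (fun w => zw (k+1) ++ w) v :=
        fun k hk v => mD_true k hk v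
      rw [Finset.sum_congr rfl (fun x _ => hmt (1+x) (by omega) _), hmt (P+1) (by omega)]
      conv_rhs => rw [Finset.sum_range_succ']
      simp only [show ∀ x:ℕ, (1:ℕ)+(x+1) = 1+x+1 from fun x => rfl,
        show ∀ x:ℕ, P+1+1-(x+1) = P+1-x from fun x => by omega,
        Nat.add_zero, Nat.sub_zero]
      rw [show zw (P+1+1) ++ W₁ = true :: (zw (P+1) ++ W₁) by rw [zw_succ _ (by omega)]; rfl]
      rw [show (fun w => zw 1 ++ w : Word → Word) = (fun x => false :: x) from rfl]
      abel
    | P+1, Q+1 =>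
      norm_num
      have h1 := IH (P+1) (Q+1+1) (by omega) (by omega) (by omega) W₁ W₂
      have h2 := IH (P+1+1) (Q+1) (by omega) (by omega) (by omega) W₁ W₂
      norm_num at h1 h2
      rw [show zw (Q+1+1) ++ W₂ = true :: (zw (Q+1) ++ W₂) by rw [zw_succ _ (by omega)]; rfl] at h1 ⊢
      rw [show zw (P+1+1) ++ W₁ = true :: (zw (P+1) ++ W₁) by rw [zw_succ _ (by omega)]; rfl] at h2 ⊢
      rw [sh_cons, h1, h2]
      simp only [Finsupp.mapDomain_add, Finsupp.mapDomain_finset_sum, Finsupp.mapDomain_smul]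
      have e1 : ∀ (x:ℕ) (v : Word →₀ ℚ), Finsupp.mapDomain (fun x => true :: x)
          (Finsupp.mapDomain (fun w => zw (P+1+x) ++ w) v) =
          Finsupp.mapDomain (fun w => zw (P+1+x+1) ++ w) v := fun x v => mD_true _ (by omega) v
      have e2 : ∀ (x:ℕ) (v : Word →₀ ℚ), Finsupp.mapDomain (fun x => true :: x)
          (Finsupp.mapDomain (fun w => zw (Q+1+1+x) ++ w) v) =
          Finsupp.mapDomain (fun w => zw (Q+1+1+x+1) ++ w) v := fun x v => mD_true _ (by omega) v
      have e3 : ∀ (x:ℕ) (v : Word →₀ ℚ), Finsupp.mapDomain (fun x => true :: x)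
          (Finsupp.mapDomain (fun w => zw (P+1+1+x) ++ w) v) =
          Finsupp.mapDomain (fun w => zw (P+1+1+x+1) ++ w) v := fun x v => mD_true _ (by omega) v
      have e4 : ∀ (x:ℕ) (v : Word →₀ ℚ), Finsupp.mapDomain (fun x => true :: x)
          (Finsupp.mapDomain (fun w => zw (Q+1+x) ++ w) v) =
          Finsupp.mapDomain (fun w => zw (Q+1+x+1) ++ w) v := fun x v => mD_true _ (by omega) v
      simp only [e1, e2, e3, e4]
      simp only [show ∀ x:ℕ, P+1+x+1 = P+1+1+x from fun x => by omega,
        show ∀ x:ℕ, Q+1+1+x+1 = Q+1+1+(x+1) from fun x => rfl,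
        show ∀ x:ℕ, P+1-x = P+1+1-(x+1) from fun x => by omega,
        show ∀ x:ℕ, P+1+1+x+1 = P+1+1+(x+1) from fun x => rfl,
        show ∀ x:ℕ, Q+1-x = Q+1+1-(x+1) from fun x => by omega,
        show ∀ x:ℕ, Q+1+x+1 = Q+1+1+x from fun x => by omega]
      rw [sum_pascal P Q (fun x => Finsupp.mapDomain (fun w => zw (P+1+1+x) ++ w) (sh W₁ (zw (Q+1+1-x) ++ W₂))),
        sum_pascal Q P (fun x => Finsupp.mapDomain (fun w => zw (Q+1+1+x) ++ w) (sh (zw (P+1+1-x) ++ W₁) W₂))]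
      abel


/-- Proposition 2.2: the first step of the shuffle product procedure.  Here `ps`
is the list `[p_{a-1}, …, p₁]` (outermost first) and `qs = [q_{b-1}, …, q₁]`. -/
theorem shuffle_step (p q : ℕ) (hp : 1 ≤ p) (hq : 1 ≤ q)
    (ps qs : List ℕ) (hps : ∀ x ∈ ps, 1 ≤ x) (hqs : ∀ x ∈ qs, 1 ≤ x) :
    sh (zw p ++ wordOf ps) (zw q ++ wordOf qs) =
      (∑ τ ∈ Finset.range q, (Nat.choose (p - 1 + τ) τ : ℚ) •
        Finsupp.mapDomain (fun w => zw (p + τ) ++ w)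
          (sh (wordOf ps) (zw (q - τ) ++ wordOf qs))) +
      (∑ τ ∈ Finset.range p, (Nat.choose (q - 1 + τ) τ : ℚ) •
        Finsupp.mapDomain (fun w => zw (q + τ) ++ w)
          (sh (zw (p - τ) ++ wordOf ps) (wordOf qs))) := by
  exact key (p+q) p q le_rfl hp hq (wordOf ps) (wordOf qs)
end

section
/- 6ζ(3,1,1) + ζ(2,2,1) = ζ(4,1) + ζ(2,3). -/
/-- The triple zeta value `ζ(k₁, k₂, k₃) = ∑_{m₁ > m₂ > m₃ > 0} ∏ m_j^{-k_j}`. -/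
noncomputable def zeta3 (k₁ k₂ k₃ : ℕ) : ℝ :=
  ∑' (a : ℕ) (b : ℕ) (c : ℕ),
    1 / (((a : ℝ) + (b : ℝ) + (c : ℝ) + 3) ^ k₁ *
         ((b : ℝ) + (c : ℝ) + 2) ^ k₂ * ((c : ℝ) + 1) ^ k₃)

open scoped ENNReal NNReal

noncomputable def w (n : ℕ) : ℝ≥0∞ := (n : ℝ≥0∞)⁻¹

lemma w_coe (n : ℕ) (hn : n ≠ 0) : w n = (((n:ℝ≥0))⁻¹ : ℝ≥0) := by
  rw [w, ← ENNReal.coe_natCast n, ← ENNReal.coe_inv (by exact_mod_cast hn)]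

lemma w_ne_top (n : ℕ) (hn : n ≠ 0) : w n ≠ ⊤ := by
  rw [w_coe n hn]; exact ENNReal.coe_ne_top

lemma w_mul (m n : ℕ) : w (m * n) = w m * w n := by
  rw [w, w, w, Nat.cast_mul, ENNReal.mul_inv]
  · exact Or.inr (ENNReal.natCast_ne_top n)
  · exact Or.inl (ENNReal.natCast_ne_top m)

lemma w_le {m n : ℕ} (h : m ≤ n) : w n ≤ w m :=
  ENNReal.inv_le_inv.2 (by exact_mod_cast h)

lemma w_one : w 1 = 1 := by simp [w]

lemma pf2 (x y : ℕ) (hx : x ≠ 0) (hy : y ≠ 0) :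
    w (x * y) = w ((x+y)*x) + w ((x+y)*y) := by
  have hx' : (x:ℝ) ≠ 0 := Nat.cast_ne_zero.2 hx
  have hy' : (y:ℝ) ≠ 0 := Nat.cast_ne_zero.2 hy
  have hxy : (x:ℝ)+(y:ℝ) ≠ 0 := by positivity
  rw [w_coe _ (by positivity), w_coe _ (by positivity), w_coe _ (by positivity),
    ← ENNReal.coe_add, ENNReal.coe_inj]
  apply NNReal.coe_injective
  push_cast
  field_simp
  ring

lemma pf3 (x y : ℕ) (hx : x ≠ 0) (hy : y ≠ 0) :
    w (x^2 * y) = w ((x+y)*x^2) + w ((x+y)^2*x) + w ((x+y)^2*y) := by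
  have hx' : (x:ℝ) ≠ 0 := Nat.cast_ne_zero.2 hx
  have hy' : (y:ℝ) ≠ 0 := Nat.cast_ne_zero.2 hy
  have hxy : (x:ℝ)+(y:ℝ) ≠ 0 := by positivity
  rw [w_coe _ (by positivity), w_coe _ (by positivity), w_coe _ (by positivity),
    w_coe _ (by positivity), ← ENNReal.coe_add, ← ENNReal.coe_add, ENNReal.coe_inj]
  apply NNReal.coe_injective
  push_cast
  field_simp
  ring

lemma pf1 (x y : ℕ) (hx : x ≠ 0) (hy : y ≠ 0) :
    w (x^2 * y^2) = 2 * w (x*(x+y)^3) + w (x^2*(x+y)^2)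
      + 2 * w (y*(x+y)^3) + w (y^2*(x+y)^2) := by
  have hx' : (x:ℝ) ≠ 0 := Nat.cast_ne_zero.2 hx
  have hy' : (y:ℝ) ≠ 0 := Nat.cast_ne_zero.2 hy
  have hxy : (x:ℝ)+(y:ℝ) ≠ 0 := by positivity
  rw [w_coe _ (by positivity), w_coe _ (by positivity), w_coe _ (by positivity),
    w_coe _ (by positivity), w_coe _ (by positivity)]
  rw [show ((2:ℝ≥0∞)) = ((2:ℝ≥0) : ℝ≥0∞) by simp]
  rw [← ENNReal.coe_mul, ← ENNReal.coe_mul, ← ENNReal.coe_add, ← ENNReal.coe_add,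
    ← ENNReal.coe_add, ENNReal.coe_inj]
  apply NNReal.coe_injective
  push_cast
  field_simp
  ring

lemma pft (x : ℕ) (hx : x ≠ 0) : w (x*(x+1)) + w (x+1) = w x := by
  have hx' : (x:ℝ) ≠ 0 := Nat.cast_ne_zero.2 hx
  have hx1 : (x:ℝ)+1 ≠ 0 := by positivity
  rw [w_coe _ (by positivity), w_coe _ (by positivity), w_coe _ (by positivity),
    ← ENNReal.coe_add, ENNReal.coe_inj]
  apply NNReal.coe_injective
  push_cast
  field_simp
  ring

lemma tsum_ite_ge (g : ℕ → ℝ≥0∞) (N : ℕ) :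
    (∑' k : ℕ, if N ≤ k then g k else 0) = ∑' t : ℕ, g (t + N) := by
  rw [← Function.Injective.tsum_eq (g := fun t : ℕ => t + N)
    (add_left_injective N) (f := fun k => if N ≤ k then g k else 0) ?_]
  · exact tsum_congr fun t => by simp [Nat.le_add_left]
  · intro x hx
    simp only [Function.mem_support, Set.mem_range] at *
    rcases le_or_gt N x with h | h
    · exact ⟨x - N, by omega⟩
    · simp [Nat.not_le.2 h] at hx

lemma tsum_split (g : ℕ → ℝ≥0∞) (N : ℕ) :
    (∑' k : ℕ, g k) = (∑ k ∈ Finset.range N, g k) + ∑' t : ℕ, g (t + N) := by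
  have : ∀ k : ℕ, g k = (if k < N then g k else 0) + (if N ≤ k then g k else 0) := by
    intro k
    rcases lt_or_ge k N with h | h
    · simp [h, Nat.not_le.2 h]
    · simp [Nat.not_lt.2 h, h]
  rw [tsum_congr this, ENNReal.tsum_add, tsum_ite_ge]
  congr 1
  rw [tsum_eq_sum (s := Finset.range N) (fun b hb => by
    simp only [Finset.mem_range] at hb; simp [hb])]
  exact Finset.sum_congr rfl fun k hk => by
    simp only [Finset.mem_range] at hk; simp [hk]

lemma tsum_ite_eq'' (g : ℕ → ℝ≥0∞) (N : ℕ) :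
    (∑' k : ℕ, if k = N then g k else 0) = g N := by
  rw [tsum_eq_single N fun b hb => by simp [hb]]
  simp

lemma tel_le (c : ℕ) : (∑' a : ℕ, w ((a+c+1)*(a+c+2))) ≤ w (c+1) := by
  have key : ∀ N : ℕ, (∑ a ∈ Finset.range N, w ((a+c+1)*(a+c+2))) + w (N+c+1) = w (c+1) := by
    intro N
    induction N with
    | zero => simp
    | succ N ih =>
      rw [Finset.sum_range_succ, add_assoc,
        show N+1+c+1 = (N+c+1)+1 by ring, show N+c+2 = (N+c+1)+1 by ring,
        pft (N+c+1) (by omega)]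
      exact ih
  rw [ENNReal.tsum_eq_iSup_sum]
  apply iSup_le
  intro s
  obtain ⟨N, hN⟩ := s.exists_nat_subset_range
  calc (∑ a ∈ s, w ((a+c+1)*(a+c+2)))
      ≤ ∑ a ∈ Finset.range N, w ((a+c+1)*(a+c+2)) :=
        Finset.sum_le_sum_of_subset hN
    _ ≤ _ := by rw [← key N]; exact le_self_add

lemma w_sq_le (c k : ℕ) (hk : 2 ≤ k) : (∑' a : ℕ, w ((a+c+2)^k)) ≤ w (c+1) := by
  refine le_trans (ENNReal.tsum_le_tsum fun a => ?_) (tel_le c)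
  exact w_le (by calc (a+c+1)*(a+c+2) ≤ (a+c+2)*(a+c+2) := by nlinarith
    _ = (a+c+2)^2 := by ring
    _ ≤ (a+c+2)^k := Nat.pow_le_pow_right (by omega) hk)

lemma basel (r : ℕ) (hr : 2 ≤ r) : (∑' b : ℕ, w ((b+1)^r)) ≤ 2 := by
  rw [tsum_split (fun b => w ((b+1)^r)) 1]
  have h1 : (∑ b ∈ Finset.range 1, w ((b+1)^r)) = 1 := by simp [w_one]
  rw [h1]
  have h2 : (∑' b : ℕ, w ((b+1+1)^r)) ≤ 1 := by
    have e : (∑' b : ℕ, w ((b+1+1)^r)) = ∑' b : ℕ, w ((b+0+2)^r) :=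
      tsum_congr fun b => by norm_num
    rw [e]
    calc (∑' b : ℕ, w ((b+0+2)^r)) ≤ w (0+1) := w_sq_le 0 r hr
      _ = 1 := w_one
  calc (1 : ℝ≥0∞) + ∑' b : ℕ, w ((b+1+1)^r) ≤ 1+1 := add_le_add le_rfl h2
    _ = 2 := by norm_num

noncomputable def t2 (p q : ℕ) : ℝ≥0∞ := ∑' (a : ℕ) (b : ℕ), w ((a+b+2)^p * (b+1)^q)

noncomputable def t3 (k1 k2 k3 : ℕ) : ℝ≥0∞ :=
  ∑' (a : ℕ) (b : ℕ) (c : ℕ), w ((a+b+c+3)^k1 * (b+c+2)^k2 * (c+1)^k3)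

lemma tsum_swap12 (f : ℕ → ℕ → ℕ → ℝ≥0∞) :
    (∑' (x : ℕ) (y : ℕ) (z : ℕ), f x y z) = ∑' (y : ℕ) (x : ℕ) (z : ℕ), f x y z :=
  ENNReal.tsum_comm

lemma tsum_swap23 (f : ℕ → ℕ → ℕ → ℝ≥0∞) :
    (∑' (x : ℕ) (y : ℕ) (z : ℕ), f x y z) = ∑' (x : ℕ) (z : ℕ) (y : ℕ), f x y z :=
  tsum_congr fun _ => ENNReal.tsum_comm

lemma t3_le_t2 (k1 k2 k3 : ℕ) (h1 : 2 ≤ k1) : t3 k1 k2 k3 ≤ t2 (k2+1) k3 := by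
  rw [t3, tsum_swap12, tsum_swap23 (fun b a c => w ((a+b+c+3)^k1 * (b+c+2)^k2 * (c+1)^k3))]
  rw [t2]
  refine ENNReal.tsum_le_tsum fun b => ENNReal.tsum_le_tsum fun c => ?_
  calc (∑' a : ℕ, w ((a+b+c+3)^k1 * (b+c+2)^k2 * (c+1)^k3))
      = ∑' a : ℕ, w ((a+(b+c+1)+2)^k1) * w ((b+c+2)^k2 * (c+1)^k3) :=
        tsum_congr fun a => by rw [← w_mul]; congr 1; ring
    _ = (∑' a : ℕ, w ((a+(b+c+1)+2)^k1)) * w ((b+c+2)^k2 * (c+1)^k3) :=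
        ENNReal.tsum_mul_right
    _ ≤ w ((b+c+1)+1) * w ((b+c+2)^k2 * (c+1)^k3) :=
        mul_le_mul_left (w_sq_le (b+c+1) k1 h1) _
    _ = w ((b+c+2)^(k2+1) * (c+1)^k3) := by rw [← w_mul]; congr 1; ring

lemma t2_le_two (p q : ℕ) (hp : 2 ≤ p) (hq : 1 ≤ q) : t2 p q ≤ 2 := by
  rw [t2, ENNReal.tsum_comm]
  refine le_trans ?_ (basel (q+1) (by omega))
  refine ENNReal.tsum_le_tsum fun b => ?_
  calc (∑' a : ℕ, w ((a+b+2)^p * (b+1)^q))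
      = ∑' a : ℕ, w ((a+b+2)^p) * w ((b+1)^q) :=
        tsum_congr fun a => by rw [← w_mul]
    _ = (∑' a : ℕ, w ((a+b+2)^p)) * w ((b+1)^q) := ENNReal.tsum_mul_right
    _ ≤ w (b+1) * w ((b+1)^q) := mul_le_mul_left (w_sq_le b p hp) _
    _ = w ((b+1)^(q+1)) := by rw [← w_mul]; congr 1; ring

lemma t2_fin (p q : ℕ) (hp : 2 ≤ p) (hq : 1 ≤ q) : t2 p q ≠ ⊤ :=
  (lt_of_le_of_lt (t2_le_two p q hp hq) (by norm_num)).ne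

lemma t3_fin (k1 k2 k3 : ℕ) (h1 : 2 ≤ k1) (h2 : 1 ≤ k2) (h3 : 1 ≤ k3) : t3 k1 k2 k3 ≠ ⊤ :=
  (lt_of_le_of_lt (le_trans (t3_le_t2 k1 k2 k3 h1)
    (t2_le_two (k2+1) k3 (by omega) h3)) (by norm_num)).ne

lemma tsum3_congr {f g : ℕ → ℕ → ℕ → ℝ≥0∞} (h : ∀ x y z, f x y z = g x y z) :
    (∑' (x : ℕ) (y : ℕ) (z : ℕ), f x y z) = ∑' (x : ℕ) (y : ℕ) (z : ℕ), g x y z :=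
  tsum_congr fun x => tsum_congr fun y => tsum_congr fun z => h x y z

noncomputable def P : ℝ≥0∞ := ∑' (k : ℕ) (a : ℕ) (b : ℕ), w ((k+1)^2 * (a+b+2)^2 * (b+1))

lemma Q4_eq : (∑' (k : ℕ) (a : ℕ) (b : ℕ),
    w ((a+b+2)^2*((k+1)+(a+b+2))^2*(b+1))) = t3 2 2 1 := by
  rw [t3]; exact tsum3_congr fun k a b => by congr 1; ring

lemma Q3_eq : (∑' (k : ℕ) (a : ℕ) (b : ℕ),
    w ((a+b+2)*((k+1)+(a+b+2))^3*(b+1))) = t3 3 1 1 := by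
  rw [t3]; exact tsum3_congr fun k a b => by congr 1; ring

lemma Q1a_eq : (∑' (k : ℕ) (a : ℕ) (b : ℕ),
    w (((k+1)+(b+1))*(k+1)*((k+1)+(a+b+2))^3)) = t3 3 1 1 := by
  rw [tsum_swap12 (fun k a b => w (((k+1)+(b+1))*(k+1)*((k+1)+(a+b+2))^3))]
  rw [tsum_swap23 (fun a k b => w (((k+1)+(b+1))*(k+1)*((k+1)+(a+b+2))^3))]
  rw [t3]; exact tsum3_congr fun a b k => by congr 1; ring

lemma Q1b_eq : (∑' (k : ℕ) (a : ℕ) (b : ℕ),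
    w (((k+1)+(b+1))*(b+1)*((k+1)+(a+b+2))^3)) = t3 3 1 1 := by
  rw [tsum_swap12 (fun k a b => w (((k+1)+(b+1))*(b+1)*((k+1)+(a+b+2))^3))]
  rw [t3]; exact tsum3_congr fun a k b => by congr 1; ring

lemma Q2a_eq : (∑' (k : ℕ) (a : ℕ) (b : ℕ),
    w (((k+1)+(b+1))*(k+1)^2*((k+1)+(a+b+2))^2)) = t3 2 1 2 := by
  rw [tsum_swap12 (fun k a b => w (((k+1)+(b+1))*(k+1)^2*((k+1)+(a+b+2))^2))]
  rw [tsum_swap23 (fun a k b => w (((k+1)+(b+1))*(k+1)^2*((k+1)+(a+b+2))^2))]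
  rw [t3]; exact tsum3_congr fun a b k => by congr 1; ring

lemma Q2b_eq : (∑' (k : ℕ) (a : ℕ) (b : ℕ),
    w (((k+1)+(b+1))^2*(k+1)*((k+1)+(a+b+2))^2)) = t3 2 2 1 := by
  rw [tsum_swap12 (fun k a b => w (((k+1)+(b+1))^2*(k+1)*((k+1)+(a+b+2))^2))]
  rw [tsum_swap23 (fun a k b => w (((k+1)+(b+1))^2*(k+1)*((k+1)+(a+b+2))^2))]
  rw [t3]; exact tsum3_congr fun a b k => by congr 1; ring

lemma Q2c_eq : (∑' (k : ℕ) (a : ℕ) (b : ℕ),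
    w (((k+1)+(b+1))^2*(b+1)*((k+1)+(a+b+2))^2)) = t3 2 2 1 := by
  rw [tsum_swap12 (fun k a b => w (((k+1)+(b+1))^2*(b+1)*((k+1)+(a+b+2))^2))]
  rw [t3]; exact tsum3_congr fun a k b => by congr 1; ring

lemma w_pow (m k : ℕ) : w (m ^ k) = (w m) ^ k := by
  rw [w, w, Nat.cast_pow, ENNReal.inv_pow]

lemma spf (x y z : ℕ) (hx : x ≠ 0) (hy : y ≠ 0) (hz : z ≠ 0) :
    w (x^2 * y^2 * z) =
      2 * w ((x+z)*x*(x+y)^3) + 2 * w ((x+z)*z*(x+y)^3)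
      + (w ((x+z)*x^2*(x+y)^2) + w ((x+z)^2*x*(x+y)^2) + w ((x+z)^2*z*(x+y)^2))
      + 2 * w (y*(x+y)^3*z) + w (y^2*(x+y)^2*z) := by
  have h1 := pf1 x y hx hy
  have h2 := pf2 x z hx hz
  have h3 := pf3 x z hx hz
  simp only [w_mul, w_pow] at h1 h2 h3 ⊢
  calc (w x)^2 * (w y)^2 * w z
      = (2 * (w x * (w (x+y))^3) + (w x)^2 * (w (x+y))^2
        + 2 * (w y * (w (x+y))^3) + (w y)^2 * (w (x+y))^2) * w z := by rw [← h1]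
    _ = 2 * ((w x * w z) * (w (x+y))^3) + ((w x)^2 * w z) * (w (x+y))^2
        + 2 * (w y * (w (x+y))^3 * w z) + (w y)^2 * (w (x+y))^2 * w z := by ring
    _ = 2 * ((w (x+z) * w x + w (x+z) * w z) * (w (x+y))^3)
        + (w (x+z) * (w x)^2 + (w (x+z))^2 * w x + (w (x+z))^2 * w z) * (w (x+y))^2
        + 2 * (w y * (w (x+y))^3 * w z) + (w y)^2 * (w (x+y))^2 * w z := by rw [← h2, ← h3]
    _ = _ := by ring

lemma shuffle_pointwise (k a b : ℕ) :
    w ((k+1)^2 * (a+b+2)^2 * (b+1)) =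
      2 * w (((k+1)+(b+1))*(k+1)*((k+1)+(a+b+2))^3)
      + 2 * w (((k+1)+(b+1))*(b+1)*((k+1)+(a+b+2))^3)
      + (w (((k+1)+(b+1))*(k+1)^2*((k+1)+(a+b+2))^2)
         + w (((k+1)+(b+1))^2*(k+1)*((k+1)+(a+b+2))^2)
         + w (((k+1)+(b+1))^2*(b+1)*((k+1)+(a+b+2))^2))
      + 2 * w ((a+b+2)*((k+1)+(a+b+2))^3*(b+1))
      + w ((a+b+2)^2*((k+1)+(a+b+2))^2*(b+1)) :=
  spf (k+1) (a+b+2) (b+1) (by omega) (by omega) (by omega)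

lemma shuffle : P = 6 * t3 3 1 1 + 3 * t3 2 2 1 + t3 2 1 2 := by
  rw [P, tsum3_congr shuffle_pointwise]
  simp only [ENNReal.tsum_add, ENNReal.tsum_mul_left]
  rw [Q4_eq, Q3_eq, Q1a_eq, Q1b_eq, Q2a_eq, Q2b_eq, Q2c_eq]
  ring

lemma piece1 : (∑' (a : ℕ) (b : ℕ) (k : ℕ),
    if k < b then w ((k+1)^2 * (a+b+2)^2 * (b+1)) else 0) = t3 2 1 2 := by
  have h1 : ∀ a : ℕ, (∑' (b : ℕ) (k : ℕ),
      if k < b then w ((k+1)^2 * (a+b+2)^2 * (b+1)) else 0)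
      = ∑' (k : ℕ) (v : ℕ), w ((k+1)^2 * (a+(v+(k+1))+2)^2 * ((v+(k+1))+1)) := by
    intro a
    rw [ENNReal.tsum_comm]
    refine tsum_congr fun k => ?_
    rw [← tsum_ite_ge (fun b => w ((k+1)^2 * (a+b+2)^2 * (b+1))) (k+1)]
    exact tsum_congr fun b => if_congr (by omega) rfl rfl
  rw [tsum_congr h1, tsum_swap23 (fun a k v => w ((k+1)^2 * (a+(v+(k+1))+2)^2 * ((v+(k+1))+1)))]
  rw [t3]
  exact tsum3_congr fun a v k => by congr 1; ring

lemma piece2 : (∑' (a : ℕ) (b : ℕ) (k : ℕ),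
    if k = b then w ((k+1)^2 * (a+b+2)^2 * (b+1)) else 0) = t2 2 3 := by
  rw [t2]
  refine tsum_congr fun a => tsum_congr fun b => ?_
  rw [tsum_ite_eq'' (fun k => w ((k+1)^2 * (a+b+2)^2 * (b+1))) b]
  congr 1; ring

lemma piece3 : (∑' (a : ℕ) (b : ℕ) (k : ℕ),
    if b+1 ≤ k then (if k < a+b+1 then w ((k+1)^2 * (a+b+2)^2 * (b+1)) else 0) else 0)
    = t3 2 2 1 := by
  have h1 : ∀ a b : ℕ, (∑' (k : ℕ),
      if b+1 ≤ k then (if k < a+b+1 then w ((k+1)^2 * (a+b+2)^2 * (b+1)) else 0) else 0)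
      = ∑' (s : ℕ), (if s+1 ≤ a then w (((s+(b+1))+1)^2 * (a+b+2)^2 * (b+1)) else 0) := by
    intro a b
    rw [tsum_ite_ge (fun k => if k < a+b+1 then w ((k+1)^2 * (a+b+2)^2 * (b+1)) else 0) (b+1)]
    exact tsum_congr fun s => if_congr (by omega) rfl rfl
  rw [tsum_congr fun a => tsum_congr fun b => h1 a b]
  rw [tsum_swap12 (fun a b s => if s+1 ≤ a then w (((s+(b+1))+1)^2 * (a+b+2)^2 * (b+1)) else 0)]
  rw [tsum_swap23 (fun b a s => if s+1 ≤ a then w (((s+(b+1))+1)^2 * (a+b+2)^2 * (b+1)) else 0)]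
  have h2 : ∀ b s : ℕ, (∑' (a : ℕ),
      if s+1 ≤ a then w (((s+(b+1))+1)^2 * (a+b+2)^2 * (b+1)) else 0)
      = ∑' (u : ℕ), w (((s+(b+1))+1)^2 * ((u+(s+1))+b+2)^2 * (b+1)) := by
    intro b s
    rw [tsum_ite_ge (fun a => w (((s+(b+1))+1)^2 * (a+b+2)^2 * (b+1))) (s+1)]
  rw [tsum_congr fun b => tsum_congr fun s => h2 b s]
  rw [tsum_swap12 (fun b s u => w (((s+(b+1))+1)^2 * ((u+(s+1))+b+2)^2 * (b+1)))]
  rw [tsum_swap23 (fun s b u => w (((s+(b+1))+1)^2 * ((u+(s+1))+b+2)^2 * (b+1)))]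
  rw [tsum_swap12 (fun s u b => w (((s+(b+1))+1)^2 * ((u+(s+1))+b+2)^2 * (b+1)))]
  rw [t3]
  exact tsum3_congr fun u s b => by congr 1; ring

lemma piece4 : (∑' (a : ℕ) (b : ℕ) (k : ℕ),
    if k = a+b+1 then w ((k+1)^2 * (a+b+2)^2 * (b+1)) else 0) = t2 4 1 := by
  rw [t2]
  refine tsum_congr fun a => tsum_congr fun b => ?_
  rw [tsum_ite_eq'' (fun k => w ((k+1)^2 * (a+b+2)^2 * (b+1))) (a+b+1)]
  congr 1; ring

set_option maxHeartbeats 1600000 in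
lemma piece5 : (∑' (a : ℕ) (b : ℕ) (k : ℕ),
    if a+b+2 ≤ k then w ((k+1)^2 * (a+b+2)^2 * (b+1)) else 0) = t3 2 2 1 := by
  have h1 : ∀ a b : ℕ, (∑' (k : ℕ),
      if a+b+2 ≤ k then w ((k+1)^2 * (a+b+2)^2 * (b+1)) else 0)
      = ∑' (t : ℕ), w (((t+(a+b+2))+1)^2 * (a+b+2)^2 * (b+1)) := by
    intro a b
    rw [tsum_ite_ge (fun k => w ((k+1)^2 * (a+b+2)^2 * (b+1))) (a+b+2)]
  rw [tsum_congr fun a => tsum_congr fun b => h1 a b]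
  rw [tsum_swap23 (fun a b t => w (((t+(a+b+2))+1)^2 * (a+b+2)^2 * (b+1)))]
  rw [tsum_swap12 (fun a t b => w (((t+(a+b+2))+1)^2 * (a+b+2)^2 * (b+1)))]
  rw [t3]
  exact tsum3_congr fun t a b => by congr 1; ring

lemma stuffle : P = 2 * t3 2 2 1 + t3 2 1 2 + t2 4 1 + t2 2 3 := by
  rw [P, tsum_swap12 (fun k a b => w ((k+1)^2 * (a+b+2)^2 * (b+1)))]
  rw [tsum_swap23 (fun a k b => w ((k+1)^2 * (a+b+2)^2 * (b+1)))]
  have split : ∀ a b k : ℕ, w ((k+1)^2 * (a+b+2)^2 * (b+1)) =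
      (if k < b then w ((k+1)^2 * (a+b+2)^2 * (b+1)) else 0)
      + (if k = b then w ((k+1)^2 * (a+b+2)^2 * (b+1)) else 0)
      + (if b+1 ≤ k then (if k < a+b+1 then w ((k+1)^2 * (a+b+2)^2 * (b+1)) else 0) else 0)
      + (if k = a+b+1 then w ((k+1)^2 * (a+b+2)^2 * (b+1)) else 0)
      + (if a+b+2 ≤ k then w ((k+1)^2 * (a+b+2)^2 * (b+1)) else 0) := by
    intro a b k
    split_ifs <;> first | omega | simp
  rw [tsum3_congr split]
  simp only [ENNReal.tsum_add]
  rw [piece1, piece2, piece3, piece4, piece5]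
  ring

lemma w_toReal (n : ℕ) : (w n).toReal = 1/(n:ℝ) := by
  simp [w, ENNReal.toReal_inv, one_div]

lemma t2_toReal (p q : ℕ) (h : t2 p q ≠ ⊤) : (t2 p q).toReal = zeta2 p q := by
  rw [t2] at h ⊢
  rw [ENNReal.tsum_toReal_eq fun a => ne_top_of_le_ne_top h (ENNReal.le_tsum a)]
  rw [zeta2]
  refine tsum_congr fun a => ?_
  rw [ENNReal.tsum_toReal_eq fun b => w_ne_top _ (by positivity)]
  refine tsum_congr fun b => ?_
  rw [w_toReal]
  congr 1
  push_cast
  ring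

lemma t3_toReal (k1 k2 k3 : ℕ) (h : t3 k1 k2 k3 ≠ ⊤) :
    (t3 k1 k2 k3).toReal = zeta3 k1 k2 k3 := by
  rw [t3] at h ⊢
  rw [ENNReal.tsum_toReal_eq fun a => ne_top_of_le_ne_top h (ENNReal.le_tsum a)]
  rw [zeta3]
  refine tsum_congr fun a => ?_
  rw [ENNReal.tsum_toReal_eq fun b =>
    ne_top_of_le_ne_top (ne_top_of_le_ne_top h (ENNReal.le_tsum a)) (ENNReal.le_tsum b)]
  refine tsum_congr fun b => ?_
  rw [ENNReal.tsum_toReal_eq fun c => w_ne_top _ (by positivity)]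
  refine tsum_congr fun c => ?_
  rw [w_toReal]
  congr 1
  push_cast
  ring

theorem double_shuffle_example :
    6 * zeta3 3 1 1 + zeta3 2 2 1 = zeta2 4 1 + zeta2 2 3 := by
  have h221 : t3 2 2 1 ≠ ⊤ := t3_fin 2 2 1 (by norm_num) (by norm_num) (by norm_num)
  have h212 : t3 2 1 2 ≠ ⊤ := t3_fin 2 1 2 (by norm_num) (by norm_num) (by norm_num)
  have h311 : t3 3 1 1 ≠ ⊤ := t3_fin 3 1 1 (by norm_num) (by norm_num) (by norm_num)
  have h41 : t2 4 1 ≠ ⊤ := t2_fin 4 1 (by norm_num) (by norm_num)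
  have h23 : t2 2 3 ≠ ⊤ := t2_fin 2 3 (by norm_num) (by norm_num)
  have hC : 2 * t3 2 2 1 + t3 2 1 2 ≠ ⊤ :=
    ENNReal.add_ne_top.2 ⟨ENNReal.mul_ne_top (by norm_num) h221, h212⟩
  have key : 6 * t3 3 1 1 + t3 2 2 1 = t2 4 1 + t2 2 3 := by
    have e : (2 * t3 2 2 1 + t3 2 1 2) + (6 * t3 3 1 1 + t3 2 2 1)
        = (2 * t3 2 2 1 + t3 2 1 2) + (t2 4 1 + t2 2 3) := by
      calc (2 * t3 2 2 1 + t3 2 1 2) + (6 * t3 3 1 1 + t3 2 2 1)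
          = 6 * t3 3 1 1 + 3 * t3 2 2 1 + t3 2 1 2 := by ring
        _ = P := shuffle.symm
        _ = 2 * t3 2 2 1 + t3 2 1 2 + t2 4 1 + t2 2 3 := stuffle
        _ = (2 * t3 2 2 1 + t3 2 1 2) + (t2 4 1 + t2 2 3) := by ring
    exact (ENNReal.add_right_inj hC).1 e
  have := congrArg ENNReal.toReal key
  rw [ENNReal.toReal_add (ENNReal.mul_ne_top (by norm_num) h311) h221,
    ENNReal.toReal_add h41 h23, ENNReal.toReal_mul] at this
  rw [t3_toReal 3 1 1 h311, t3_toReal 2 2 1 h221, t2_toReal 4 1 h41, t2_toReal 2 3 h23] at this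
  simpa using this
end
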